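/- arXiv:2003.05247 — 5 statements merged into one kernel-verified Lean document; each statement's English description precedes it below -/
import Mathlib

section
/- Let Θ be an inner function with values in L(E) such that ‖Θ(0)‖ < 1. Then the set D_* = {(1/z)(Θ(z) − Θ(0))x : x ∈ E} is a linear subspace of the model space K_Θ whose dimension equals the dimension of E. -/
open MeasureTheory Complex ContinuousLinearMap
open scoped ComplexInnerProductSpace

noncomputable section

/-- The circle `𝕋`, realized as `ℝ / 2πℤ`; the point `t` corresponds to `e^{it}`. -/
abbrev Circle2pi : Type := AddCircle (2 * Real.pi)

instance : Fact (0 < 2 * Real.pi) := ⟨by positivity⟩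

/-- Normalized Haar (arc-length) measure on the circle. -/
abbrev haarCircle2pi : Measure Circle2pi := AddCircle.haarAddCircle

variable {E : Type} [NormedAddCommGroup E] [InnerProductSpace ℂ E] [FiniteDimensional ℂ E]

/-- `Θ`, given by its boundary-value function on the circle, is an inner function: it is
(a.e. strongly) measurable, its boundary values are a.e. unitary operators on `E`, and its
Fourier coefficients of negative index vanish (the latter says exactly that `Θ` is the
boundary-value function of a bounded analytic `L(E)`-valued function on the unit disc,
i.e. an element of `H^∞(L(E))`). -/
structure IsInner (Θ : Circle2pi → (E →L[ℂ] E)) : Prop where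
  meas : AEStronglyMeasurable Θ haarCircle2pi
  unit : ∀ᵐ t ∂haarCircle2pi, Θ t ∈ unitary (E →L[ℂ] E)
  anal : ∀ n : ℤ, n < 0 → fourierCoeff Θ n = 0

/-- Membership in the Hardy space `H²(E)`, viewed as the subspace of `L²(E)` of functions
whose Fourier coefficients of negative index vanish. -/
def MemH2 (f : Lp E 2 haarCircle2pi) : Prop :=
  ∀ n : ℤ, n < 0 → fourierCoeff (⇑f) n = 0

/-- Membership in the model space `K_Θ = H²(E) ⊖ Θ H²(E)`: `f` belongs to `H²(E)` and is
orthogonal to `Θ H²(E)`. -/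
def MemK (Θ : Circle2pi → (E →L[ℂ] E)) (f : Lp E 2 haarCircle2pi) : Prop :=
  MemH2 f ∧ ∀ g : Lp E 2 haarCircle2pi, MemH2 g →
    ∫ t, ⟪f t, Θ t (g t)⟫ ∂haarCircle2pi = 0

/-- The boundary values of `Θ̃(z) = Θ(z̄)*`, namely `Θ̃(e^{it}) = Θ(e^{-it})*`. -/
def tild (Θ : Circle2pi → (E →L[ℂ] E)) : Circle2pi → (E →L[ℂ] E) :=
  fun t => adjoint (Θ (-t))

/-- `τ` is the operator on `L²(E)` given by `(τ f)(e^{it}) = e^{-it} Θ(e^{-it})* f(e^{-it})`. -/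
def IsTau (Θ : Circle2pi → (E →L[ℂ] E))
    (τ : Lp E 2 haarCircle2pi →L[ℂ] Lp E 2 haarCircle2pi) : Prop :=
  ∀ f : Lp E 2 haarCircle2pi,
    (⇑(τ f)) =ᵐ[haarCircle2pi] fun t => fourier (-1) t • (adjoint (Θ (-t))) (f (-t))

/-- `P` is the orthogonal projection of `L²(E)` onto the model space `K_Θ`:
its range lies in `K_Θ`, it fixes `K_Θ`, and `f - P f` is orthogonal to `K_Θ`. -/
def IsProjK (Θ : Circle2pi → (E →L[ℂ] E))
    (P : Lp E 2 haarCircle2pi →L[ℂ] Lp E 2 haarCircle2pi) : Prop :=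
  (∀ f, MemK Θ (P f)) ∧ (∀ f, MemK Θ f → P f = f) ∧
    ∀ f g, MemK Θ g → ⟪f - P f, g⟫ = 0

/-- `S` acts on the model space `K_Θ` as the compressed shift `S_Θ f = P_Θ (z f)`:
for `f ∈ K_Θ`, `S f ∈ K_Θ` and `S f - z f` is orthogonal to `K_Θ`, i.e.
`⟪S f, g⟫ = ⟪z f, g⟫` for all `g ∈ K_Θ`. -/
def IsCompShift (Θ : Circle2pi → (E →L[ℂ] E))
    (S : Lp E 2 haarCircle2pi →L[ℂ] Lp E 2 haarCircle2pi) : Prop :=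
  ∀ f, MemK Θ f → MemK Θ (S f) ∧
    ∀ g, MemK Θ g → ⟪S f, g⟫ = ∫ t, ⟪fourier 1 t • f t, g t⟫ ∂haarCircle2pi

/-- `A` acts on the model space `K_Θ` as the adjoint `S_Θ*` of the compressed shift `S`:
for `f ∈ K_Θ`, `A f ∈ K_Θ` and `⟪A f, g⟫ = ⟪f, S g⟫` for all `g ∈ K_Θ`. -/
def IsCompShiftAdj (Θ : Circle2pi → (E →L[ℂ] E))
    (S A : Lp E 2 haarCircle2pi →L[ℂ] Lp E 2 haarCircle2pi) : Prop :=
  ∀ f, MemK Θ f → MemK Θ (A f) ∧ ∀ g, MemK Θ g → ⟪A f, g⟫ = ⟪f, S g⟫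

/-- The subspace `D = {(I - Θ(z) Θ(0)*) x : x ∈ E}` of `K_Θ`, described through boundary
values; here `Θ(0)` is the 0-th Fourier coefficient of `Θ`. -/
def DSet (Θ : Circle2pi → (E →L[ℂ] E)) : Set (Lp E 2 haarCircle2pi) :=
  {f | ∃ x : E, (⇑f) =ᵐ[haarCircle2pi]
    fun t => x - Θ t (adjoint (fourierCoeff Θ 0) x)}

/-- The subspace `D_* = {(1/z)(Θ(z) - Θ(0)) x : x ∈ E}` of `K_Θ`, described through
boundary values. -/
def DStarSet (Θ : Circle2pi → (E →L[ℂ] E)) : Set (Lp E 2 haarCircle2pi) :=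
  {f | ∃ x : E, (⇑f) =ᵐ[haarCircle2pi]
    fun t => fourier (-1) t • (Θ t x - fourierCoeff Θ 0 x)}

/-- `A` is a matrix-valued truncated Toeplitz operator on `K_Θ`, i.e. `A ∈ T_Θ`: there is a
symbol `Φ ∈ L²(L(E))` such that `A f = P_Θ (Φ f)` for every `f` in
`K_Θ^∞ = K_Θ ∩ H^∞(E)`; the compression is expressed by: `A f ∈ K_Θ` and
`⟪A f, g⟫ = ⟪Φ f, g⟫` for every `g ∈ K_Θ`. -/
def MemTT (Θ : Circle2pi → (E →L[ℂ] E))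
    (A : Lp E 2 haarCircle2pi →L[ℂ] Lp E 2 haarCircle2pi) : Prop :=
  ∃ Φ : Circle2pi → (E →L[ℂ] E), MemLp Φ 2 haarCircle2pi ∧
    ∀ f, MemK Θ f → MemLp (⇑f) ⊤ haarCircle2pi →
      MemK Θ (A f) ∧ ∀ g, MemK Θ g → ⟪A f, g⟫ = ∫ t, ⟪Φ t (f t), g t⟫ ∂haarCircle2pi

set_option linter.unusedSectionVars false
namespace DStarAux

lemma norm_fourier (n : ℤ) (t : Circle2pi) : ‖(fourier n t : ℂ)‖ = 1 := by
  rw [fourier_apply, Circle.norm_coe]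

lemma fourier_ne_zero (n : ℤ) (t : Circle2pi) : (fourier n t : ℂ) ≠ 0 := by
  intro h
  have := norm_fourier n t
  rw [h, norm_zero] at this
  norm_num at this

lemma integral_fourier_eq_zero {n : ℤ} (hn : n ≠ 0) :
    ∫ t, (fourier n t : ℂ) ∂haarCircle2pi = 0 :=
  integral_eq_zero_of_add_right_eq_neg
    (fourier_add_half_inv_index hn (by positivity))

section G
variable {G : Type} [NormedAddCommGroup G] [NormedSpace ℂ G] [CompleteSpace G]

lemma fourierCoeff_congr_ae {f g : Circle2pi → G} (h : f =ᵐ[haarCircle2pi] g) (n : ℤ) :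
    fourierCoeff f n = fourierCoeff g n := by
  unfold fourierCoeff
  exact integral_congr_ae (h.mono fun t ht => by dsimp only; rw [ht])

lemma fourierCoeff_fourier_smul (m n : ℤ) (f : Circle2pi → G) :
    fourierCoeff (fun t => fourier m t • f t) n = fourierCoeff f (n - m) := by
  unfold fourierCoeff
  congr 1
  funext t
  rw [smul_smul, ← fourier_add]
  congr 2
  ring

lemma integrable_fourier_smul_of_bound {f : Circle2pi → G}
    (hf : AEStronglyMeasurable f haarCircle2pi) (C : ℝ)
    (hC : ∀ᵐ t ∂haarCircle2pi, ‖f t‖ ≤ C) (n : ℤ) :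
    Integrable (fun t => fourier n t • f t) haarCircle2pi := by
  refine Integrable.mono' (integrable_const C)
    (((fourier n).continuous.aestronglyMeasurable).smul hf) ?_
  filter_upwards [hC] with t ht
  rw [norm_smul, norm_fourier, one_mul]
  exact ht

lemma integrable_fourier_smul_L2 {E' : Type} [NormedAddCommGroup E'] [InnerProductSpace ℂ E']
    (g : Lp E' 2 haarCircle2pi) (n : ℤ) :
    Integrable (fun t => fourier n t • g t) haarCircle2pi := by
  refine Integrable.mono' ((Lp.memLp g).integrable one_le_two).norm
    (((fourier n).continuous.aestronglyMeasurable).smul (Lp.aestronglyMeasurable g)) ?_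
  filter_upwards with t
  rw [norm_smul, norm_fourier, one_mul]

lemma fourierCoeff_comp_clm {G' : Type} [NormedAddCommGroup G'] [NormedSpace ℂ G']
    [CompleteSpace G'] (L : G →L[ℂ] G') {f : Circle2pi → G} {n : ℤ}
    (hint : Integrable (fun t => fourier (-n) t • f t) haarCircle2pi) :
    fourierCoeff (fun t => L (f t)) n = L (fourierCoeff f n) := by
  unfold fourierCoeff
  simp_rw [← L.map_smul]
  exact L.integral_comp_comm hint

lemma fourierCoeff_const (v : G) (n : ℤ) :
    fourierCoeff (fun _ : Circle2pi => v) n = if n = 0 then v else 0 := by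
  unfold fourierCoeff
  split_ifs with h
  · subst h
    simp_rw [neg_zero, fourier_zero, one_smul, integral_const, probReal_univ,
      one_smul]
  · rw [integral_smul_const, integral_fourier_eq_zero (neg_ne_zero.mpr h), zero_smul]

lemma fourierCoeff_sub {f g : Circle2pi → G} {n : ℤ}
    (hf : Integrable (fun t => fourier (-n) t • f t) haarCircle2pi)
    (hg : Integrable (fun t : Circle2pi => fourier (-n) t • g t) haarCircle2pi) :
    fourierCoeff (fun t => f t - g t) n = fourierCoeff f n - fourierCoeff g n := by
  unfold fourierCoeff
  simp_rw [smul_sub]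
  exact integral_sub hf hg

lemma fourierCoeff_conj {f : Circle2pi → ℂ} (n : ℤ) :
    fourierCoeff (fun t => (starRingEnd ℂ) (f t)) n = (starRingEnd ℂ) (fourierCoeff f (-n)) := by
  unfold fourierCoeff
  rw [← integral_conj]
  congr 1
  funext t
  rw [smul_eq_mul, smul_eq_mul, map_mul, ← fourier_neg, neg_neg]

end G

lemma unitary_adjoint_apply_apply {U : E →L[ℂ] E} (hU : U ∈ unitary (E →L[ℂ] E)) (y : E) :
    adjoint U (U y) = y := by
  have h : star U * U = 1 := hU.1
  have : (star U) (U y) = y := by rw [show (star U) (U y) = (star U * U) y from rfl, h]; rfl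
  rwa [star_eq_adjoint] at this

lemma unitary_inner {U : E →L[ℂ] E} (hU : U ∈ unitary (E →L[ℂ] E)) (a b : E) :
    ⟪U a, U b⟫ = ⟪a, b⟫ := by
  rw [← adjoint_inner_left U b (U a), unitary_adjoint_apply_apply hU]

lemma unitary_norm_apply {U : E →L[ℂ] E} (hU : U ∈ unitary (E →L[ℂ] E)) (y : E) :
    ‖U y‖ = ‖y‖ := by
  have h := unitary_inner hU y y
  rw [inner_self_eq_norm_sq_to_K (𝕜 := ℂ), inner_self_eq_norm_sq_to_K (𝕜 := ℂ)] at h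
  have h2 : (‖U y‖ : ℝ) ^ 2 = (‖y‖ : ℝ) ^ 2 := by exact_mod_cast h
  rw [← Real.sqrt_sq (norm_nonneg (U y)), ← Real.sqrt_sq (norm_nonneg y), h2]

lemma unitary_opNorm_le {U : E →L[ℂ] E} (hU : U ∈ unitary (E →L[ℂ] E)) : ‖U‖ ≤ 1 :=
  U.opNorm_le_bound zero_le_one fun y => by rw [unitary_norm_apply hU, one_mul]

-- ========== PART 2 ==========

variable {Θ : Circle2pi → (E →L[ℂ] E)}

lemma ae_norm (hΘ : IsInner Θ) :
    ∀ᵐ t ∂haarCircle2pi, ∀ y : E, ‖Θ t y‖ = ‖y‖ :=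
  hΘ.unit.mono fun _ ht => unitary_norm_apply ht

lemma ae_opNorm (hΘ : IsInner Θ) : ∀ᵐ t ∂haarCircle2pi, ‖Θ t‖ ≤ 1 :=
  hΘ.unit.mono fun _ ht => unitary_opNorm_le ht

lemma aesm_apply (hΘ : IsInner Θ) (x : E) :
    AEStronglyMeasurable (fun t => Θ t x) haarCircle2pi :=
  hΘ.meas.apply_continuousLinearMap x

lemma integrable_fourier_smul_op (hΘ : IsInner Θ) (n : ℤ) :
    Integrable (fun t => fourier n t • Θ t) haarCircle2pi :=
  integrable_fourier_smul_of_bound hΘ.meas 1 (ae_opNorm hΘ) n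

lemma integrable_fourier_smul_apply (hΘ : IsInner Θ) (x : E) (n : ℤ) :
    Integrable (fun t => fourier n t • Θ t x) haarCircle2pi := by
  refine integrable_fourier_smul_of_bound (aesm_apply hΘ x) ‖x‖ ?_ n
  filter_upwards [ae_norm hΘ] with t ht
  rw [ht x]

lemma coeff_apply (hΘ : IsInner Θ) (x : E) (n : ℤ) :
    fourierCoeff (fun t => Θ t x) n = (fourierCoeff Θ n) x := by
  have := fourierCoeff_comp_clm (ContinuousLinearMap.apply ℂ E x)
    (integrable_fourier_smul_op hΘ (-n))
  simpa using this

/-- The function `(1/z)(Θ(z) - Θ(0)) x` through boundary values. -/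
def Ffun (Θ : Circle2pi → (E →L[ℂ] E)) (x : E) : Circle2pi → E :=
  fun t => fourier (-1) t • (Θ t x - fourierCoeff Θ 0 x)

lemma memF (hΘ : IsInner Θ) (x : E) : MemLp (Ffun Θ x) 2 haarCircle2pi := by
  refine MemLp.of_bound (((fourier (-1)).continuous.aestronglyMeasurable).smul
    ((aesm_apply hΘ x).sub aestronglyMeasurable_const)) (‖x‖ + ‖fourierCoeff Θ 0 x‖) ?_
  filter_upwards [ae_norm hΘ] with t ht
  calc ‖Ffun Θ x t‖ = ‖Θ t x - fourierCoeff Θ 0 x‖ := by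
        rw [Ffun, norm_smul, norm_fourier, one_mul]
    _ ≤ ‖Θ t x‖ + ‖fourierCoeff Θ 0 x‖ := norm_sub_le _ _
    _ = ‖x‖ + ‖fourierCoeff Θ 0 x‖ := by rw [ht x]

lemma coeffF (hΘ : IsInner Θ) (x : E) (n : ℤ) :
    fourierCoeff (Ffun Θ x) n
      = (fourierCoeff Θ (n + 1)) x - (if n + 1 = 0 then (fourierCoeff Θ 0) x else 0) := by
  have h1 : fourierCoeff (Ffun Θ x) n
      = fourierCoeff (fun t => Θ t x - fourierCoeff Θ 0 x) (n - (-1)) :=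
    fourierCoeff_fourier_smul (-1) n _
  rw [h1, show n - (-1) = n + 1 by ring,
    fourierCoeff_sub (integrable_fourier_smul_apply hΘ x _)
      (integrable_fourier_smul_of_bound aestronglyMeasurable_const
        ‖fourierCoeff Θ 0 x‖ (Filter.Eventually.of_forall fun _ => le_rfl) _),
    coeff_apply hΘ, fourierCoeff_const]

lemma coeffF_neg (hΘ : IsInner Θ) (x : E) {n : ℤ} (hn : n < 0) :
    fourierCoeff (Ffun Θ x) n = 0 := by
  rw [coeffF hΘ]
  by_cases h : n + 1 = 0
  · rw [if_pos h, h, sub_self]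
  · rw [if_neg h, hΘ.anal (n + 1) (by omega), ContinuousLinearMap.zero_apply, sub_zero]

/-- `q(t) = e^{-it} (x - adjoint Θ(t) (Θ0 x))`. -/
def qfun (Θ : Circle2pi → (E →L[ℂ] E)) (x : E) : Circle2pi → E :=
  fun t => fourier (-1) t • (x - adjoint (Θ t) (fourierCoeff Θ 0 x))

lemma aesm_adjoint_apply (hΘ : IsInner Θ) (v : E) :
    AEStronglyMeasurable (fun t => adjoint (Θ t) v) haarCircle2pi := by
  have hc : Continuous fun A : E →L[ℂ] E => adjoint A v :=
    (ContinuousLinearMap.apply ℂ E v).continuous.comp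
      (ContinuousLinearMap.adjoint (E := E) (F := E) (𝕜 := ℂ)).continuous
  exact hc.comp_aestronglyMeasurable hΘ.meas

lemma ae_norm_adjoint (hΘ : IsInner Θ) (v : E) :
    ∀ᵐ t ∂haarCircle2pi, ‖adjoint (Θ t) v‖ ≤ ‖v‖ := by
  filter_upwards [ae_opNorm hΘ] with t ht
  calc ‖adjoint (Θ t) v‖ ≤ ‖adjoint (Θ t)‖ * ‖v‖ := (adjoint (Θ t)).le_opNorm v
    _ = ‖Θ t‖ * ‖v‖ := by
        rw [LinearIsometryEquiv.norm_map (ContinuousLinearMap.adjoint (𝕜 := ℂ))]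
    _ ≤ 1 * ‖v‖ := by gcongr
    _ = ‖v‖ := one_mul _

lemma mem_q (hΘ : IsInner Θ) (x : E) : MemLp (qfun Θ x) 2 haarCircle2pi := by
  refine MemLp.of_bound (((fourier (-1)).continuous.aestronglyMeasurable).smul
    (aestronglyMeasurable_const.sub (aesm_adjoint_apply hΘ (fourierCoeff Θ 0 x))))
    (‖x‖ + ‖fourierCoeff Θ 0 x‖) ?_
  filter_upwards [ae_norm_adjoint hΘ (fourierCoeff Θ 0 x)] with t ht
  calc ‖qfun Θ x t‖ = ‖x - adjoint (Θ t) (fourierCoeff Θ 0 x)‖ := by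
        rw [qfun, norm_smul, norm_fourier, one_mul]
    _ ≤ ‖x‖ + ‖adjoint (Θ t) (fourierCoeff Θ 0 x)‖ := norm_sub_le _ _
    _ ≤ ‖x‖ + ‖fourierCoeff Θ 0 x‖ := by gcongr

lemma coeff_q_scalar (hΘ : IsInner Θ) (x v : E) {n : ℤ} (hn : 0 ≤ n) :
    fourierCoeff (fun t => (⟪v, qfun Θ x t⟫ : ℂ)) n = 0 := by
  set c : E := fourierCoeff Θ 0 x with hc
  have hrw : (fun t => (⟪v, qfun Θ x t⟫ : ℂ))
      = fun t => fourier (-1) t •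
        ((⟪v, x⟫ : ℂ) - (starRingEnd ℂ) (⟪c, Θ t v⟫ : ℂ)) := by
    funext t
    rw [qfun, inner_smul_right, inner_sub_right, adjoint_inner_right, inner_conj_symm]
    rfl
  have hφm : AEStronglyMeasurable (fun t => (⟪c, Θ t v⟫ : ℂ)) haarCircle2pi :=
    aestronglyMeasurable_const.inner (aesm_apply hΘ v)
  have hφb : ∀ᵐ t ∂haarCircle2pi, ‖(starRingEnd ℂ) (⟪c, Θ t v⟫ : ℂ)‖ ≤ ‖c‖ * ‖v‖ := by
    filter_upwards [ae_norm hΘ] with t ht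
    rw [RCLike.norm_conj]
    calc ‖(⟪c, Θ t v⟫ : ℂ)‖ ≤ ‖c‖ * ‖Θ t v‖ := norm_inner_le_norm _ _
      _ = ‖c‖ * ‖v‖ := by rw [ht v]
  have h2 : fourierCoeff (fun t => (⟪v, qfun Θ x t⟫ : ℂ)) n
      = fourierCoeff (fun t => (⟪v, x⟫ : ℂ) - (starRingEnd ℂ) (⟪c, Θ t v⟫ : ℂ)) (n + 1) := by
    rw [hrw, fourierCoeff_fourier_smul, show n - (-1) = n + 1 by ring]
  rw [h2, fourierCoeff_sub
      (integrable_fourier_smul_of_bound aestronglyMeasurable_const ‖(⟪v, x⟫ : ℂ)‖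
        (Filter.Eventually.of_forall fun _ => le_rfl) _)
      (integrable_fourier_smul_of_bound
        ((RCLike.continuous_conj).comp_aestronglyMeasurable hφm) (‖c‖ * ‖v‖) hφb _),
    fourierCoeff_const, if_neg (by omega : ¬ n + 1 = 0), fourierCoeff_conj]
  have hφ : fourierCoeff (fun t => (⟪c, Θ t v⟫ : ℂ)) (-(n + 1)) = 0 := by
    have h3 := fourierCoeff_comp_clm (innerSL ℂ c) (f := fun t => Θ t v) (n := -(n+1))
      (integrable_fourier_smul_apply hΘ v _)
    rw [show (fun t => (innerSL ℂ c) (Θ t v)) = fun t => (⟪c, Θ t v⟫ : ℂ) from rfl] at h3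
    rw [h3, coeff_apply hΘ, hΘ.anal (-(n+1)) (by omega), ContinuousLinearMap.zero_apply,
      innerSL_apply_apply, inner_zero_right]
  rw [hφ, map_zero, zero_sub, neg_zero]

lemma coeff_g_scalar (v : E) (g : Lp E 2 haarCircle2pi) (hg : MemH2 g)
    {n : ℤ} (hn : n < 0) :
    fourierCoeff (fun t => (⟪v, g t⟫ : ℂ)) n = 0 := by
  have h3 := fourierCoeff_comp_clm (innerSL ℂ v) (f := (g : Circle2pi → E)) (n := n)
    (integrable_fourier_smul_L2 g (-n))
  rw [show (fun t => (innerSL ℂ v) (g t)) = fun t => (⟪v, g t⟫ : ℂ) from rfl] at h3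
  rw [h3, hg n hn, innerSL_apply_apply, inner_zero_right]

lemma integrable_conj_mul {u w : Circle2pi → ℂ} (hu : MemLp u 2 haarCircle2pi)
    (hw : MemLp w 2 haarCircle2pi) :
    Integrable (fun t => (starRingEnd ℂ) (u t) * w t) haarCircle2pi := by
  refine (L2.integrable_inner (𝕜 := ℂ) (hu.toLp u) (hw.toLp w)).congr ?_
  filter_upwards [hu.coeFn_toLp, hw.coeFn_toLp] with t h1 h2
  rw [RCLike.inner_apply, h1, h2, mul_comm]

lemma parseval_vanish {u w : Circle2pi → ℂ} (hu : MemLp u 2 haarCircle2pi)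
    (hw : MemLp w 2 haarCircle2pi)
    (hu' : ∀ n : ℤ, 0 ≤ n → fourierCoeff u n = 0)
    (hw' : ∀ n : ℤ, n < 0 → fourierCoeff w n = 0) :
    ∫ t, (starRingEnd ℂ) (u t) * w t ∂haarCircle2pi = 0 := by
  have key : (⟪hu.toLp u, hw.toLp w⟫ : ℂ) = 0 := by
    rw [← fourierBasis.repr.inner_map_map (hu.toLp u) (hw.toLp w), lp.inner_eq_tsum]
    have hterm : ∀ n : ℤ,
        (⟪(fourierBasis.repr (hu.toLp u)) n, (fourierBasis.repr (hw.toLp w)) n⟫ : ℂ) = 0 := by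
      intro n
      rcases lt_or_ge n 0 with hn | hn
      · have h0 : (fourierBasis.repr (hw.toLp w)) n = 0 := by
          rw [fourierBasis_repr, fourierCoeff_congr_ae hw.coeFn_toLp, hw' n hn]
        rw [h0, inner_zero_right]
      · have h0 : (fourierBasis.repr (hu.toLp u)) n = 0 := by
          rw [fourierBasis_repr, fourierCoeff_congr_ae hu.coeFn_toLp, hu' n hn]
        rw [h0, inner_zero_left]
    rw [tsum_congr hterm, tsum_zero]
  rw [L2.inner_def] at key
  rw [← key]
  apply integral_congr_ae
  filter_upwards [hu.coeFn_toLp, hw.coeFn_toLp] with t h1 h2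
  rw [RCLike.inner_apply, h1, h2, mul_comm]

lemma orth (hΘ : IsInner Θ) (x : E) (g : Lp E 2 haarCircle2pi) (hg : MemH2 g) :
    ∫ t, ⟪Ffun Θ x t, Θ t (g t)⟫ ∂haarCircle2pi = 0 := by
  classical
  set b := stdOrthonormalBasis ℂ E with hb
  have hA : ∀ᵐ t ∂haarCircle2pi, (⟪Ffun Θ x t, Θ t (g t)⟫ : ℂ) = ⟪qfun Θ x t, g t⟫ := by
    filter_upwards [hΘ.unit] with t ht
    rw [← adjoint_inner_left (Θ t) (g t) (Ffun Θ x t)]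
    congr 1
    rw [Ffun, qfun, _root_.map_smul, map_sub, unitary_adjoint_apply_apply ht]
  rw [integral_congr_ae hA]
  have hptwise : ∀ t, (⟪qfun Θ x t, g t⟫ : ℂ)
      = ∑ i, (starRingEnd ℂ) (⟪b i, qfun Θ x t⟫ : ℂ) * (⟪b i, g t⟫ : ℂ) := by
    intro t
    rw [← OrthonormalBasis.sum_inner_mul_inner b]
    exact Finset.sum_congr rfl fun i _ => by rw [inner_conj_symm]
  simp_rw [hptwise]
  rw [integral_finset_sum]
  · refine Finset.sum_eq_zero fun i _ => ?_
    exact parseval_vanish ((mem_q hΘ x).const_inner (b i)) ((Lp.memLp g).const_inner (b i))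
      (fun n hn => coeff_q_scalar hΘ x (b i) hn)
      (fun n hn => coeff_g_scalar (b i) g hg hn)
  · intro i _
    exact integrable_conj_mul ((mem_q hΘ x).const_inner (b i)) ((Lp.memLp g).const_inner (b i))

end DStarAux

namespace DStarAux

variable {Θ : Circle2pi → (E →L[ℂ] E)}

lemma memK_of_ae (hΘ : IsInner Θ) {x : E} {f : Lp E 2 haarCircle2pi}
    (hf : (⇑f) =ᵐ[haarCircle2pi] Ffun Θ x) : MemK Θ f := by
  constructor
  · intro n hn
    rw [fourierCoeff_congr_ae hf, coeffF_neg hΘ x hn]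
  · intro g hg
    have hcongr : (fun t => (⟪f t, Θ t (g t)⟫ : ℂ))
        =ᵐ[haarCircle2pi] fun t => (⟪Ffun Θ x t, Θ t (g t)⟫ : ℂ) := by
      filter_upwards [hf] with t ht
      rw [ht]
    rw [integral_congr_ae hcongr]
    exact orth hΘ x g hg

def Tmap (hΘ : IsInner Θ) : E →ₗ[ℂ] Lp E 2 haarCircle2pi where
  toFun x := (memF hΘ x).toLp _
  map_add' x y := by
    rw [← MemLp.toLp_add (memF hΘ x) (memF hΘ y)]
    refine MemLp.toLp_congr _ _ (Filter.Eventually.of_forall fun t => ?_)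
    simp only [Ffun, Pi.add_apply, map_add, add_sub_add_comm, smul_add]
  map_smul' r x := by
    rw [RingHom.id_apply, ← MemLp.toLp_const_smul r (memF hΘ x)]
    refine MemLp.toLp_congr (memF hΘ (r • x)) ((memF hΘ x).const_smul r)
      (Filter.Eventually.of_forall fun t => ?_)
    simp only [Ffun, Pi.smul_apply, _root_.map_smul, ← smul_sub]
    rw [smul_comm]

lemma Tmap_coe (hΘ : IsInner Θ) (x : E) :
    (⇑(Tmap hΘ x)) =ᵐ[haarCircle2pi] Ffun Θ x :=
  (memF hΘ x).coeFn_toLp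

lemma Tmap_inj (hΘ : IsInner Θ) (hΘ0 : ‖fourierCoeff Θ 0‖ < 1) :
    Function.Injective (Tmap hΘ) := by
  refine (injective_iff_map_eq_zero _).mpr fun x hx => ?_
  have h0 : Ffun Θ x =ᵐ[haarCircle2pi] (fun _ => (0 : E)) := by
    refine ((Tmap_coe hΘ x).symm.trans ?_)
    rw [hx]
    exact Lp.coeFn_zero E 2 haarCircle2pi
  obtain ⟨t, h1, h2⟩ := (h0.and hΘ.unit).exists
  by_contra hx0
  have hxpos : (0 : ℝ) < ‖x‖ := norm_pos_iff.mpr hx0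
  have h3 : Θ t x = fourierCoeff Θ 0 x := by
    rcases smul_eq_zero.mp h1 with h | h
    · exact absurd h (fourier_ne_zero (-1) t)
    · exact sub_eq_zero.mp h
  have h4 : ‖x‖ ≤ ‖fourierCoeff Θ 0‖ * ‖x‖ := by
    calc ‖x‖ = ‖Θ t x‖ := (unitary_norm_apply h2 x).symm
      _ = ‖fourierCoeff Θ 0 x‖ := by rw [h3]
      _ ≤ ‖fourierCoeff Θ 0‖ * ‖x‖ := (fourierCoeff Θ 0).le_opNorm x
  nlinarith

end DStarAux

/-- If `Θ` is inner with `‖Θ(0)‖ < 1`, then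
`D_* = {(1/z)(Θ(z) - Θ(0)) x : x ∈ E}` is a linear subspace of the model space `K_Θ`
whose dimension equals the dimension of `E`. -/
theorem DStarSet_subspace_of_model_space (Θ : Circle2pi → (E →L[ℂ] E)) (hΘ : IsInner Θ)
    (hΘ0 : ‖fourierCoeff Θ 0‖ < 1) :
    ∃ V : Submodule ℂ (Lp E 2 haarCircle2pi),
      (V : Set (Lp E 2 haarCircle2pi)) = DStarSet Θ ∧
      (∀ f ∈ V, MemK Θ f) ∧
      Module.finrank ℂ V = Module.finrank ℂ E := by
  refine ⟨LinearMap.range (DStarAux.Tmap hΘ), ?_, ?_, ?_⟩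
  · ext f
    simp only [SetLike.mem_coe, LinearMap.mem_range, DStarSet, Set.mem_setOf_eq]
    constructor
    · rintro ⟨x, rfl⟩
      exact ⟨x, DStarAux.Tmap_coe hΘ x⟩
    · rintro ⟨x, hx⟩
      exact ⟨x, Lp.ext ((DStarAux.Tmap_coe hΘ x).trans hx.symm)⟩
  · intro f hf
    obtain ⟨x, rfl⟩ := LinearMap.mem_range.mp hf
    exact DStarAux.memK_of_ae hΘ (DStarAux.Tmap_coe hΘ x)
  · exact LinearMap.finrank_range_of_inj (DStarAux.Tmap_inj hΘ hΘ0)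
end
end

section
/- Let Θ be an inner function with values in L(E), let K_Θ be its model space, let S_Θ be the compressed shift on K_Θ, and let D_* = {(1/z)(Θ(z) − Θ(0))x : x ∈ E}. If f ∈ K_Θ is orthogonal to D_*, then (S_Θ f)(z) = z f(z). -/
open MeasureTheory Complex ContinuousLinearMap
open scoped ComplexInnerProductSpace

noncomputable section

variable {E : Type} [NormedAddCommGroup E] [InnerProductSpace ℂ E] [FiniteDimensional ℂ E]

lemma memLp_fourier_smul {F : Circle2pi → E} (hF : MemLp F 2 haarCircle2pi) (n : ℤ) :
    MemLp (fun t => fourier n t • F t) 2 haarCircle2pi := by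
  have hm : AEStronglyMeasurable (fun t => fourier n t • F t) haarCircle2pi :=
    ((fourier n).continuous.aestronglyMeasurable).smul hF.1
  refine ⟨hm, ?_⟩
  have he : eLpNorm (fun t => fourier n t • F t) 2 haarCircle2pi = eLpNorm F 2 haarCircle2pi := by
    refine eLpNorm_congr_norm_ae (.of_forall fun t => ?_)
    simp [norm_smul, Circle.norm_coe]
  rw [he]; exact hF.2

lemma fourierCoeff_fourier_smul (F : Circle2pi → E) (m n : ℤ) :
    fourierCoeff (fun t => fourier m t • F t) n = fourierCoeff F (n - m) := by
  simp only [fourierCoeff]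
  have hpt : ∀ t : Circle2pi, fourier (-n) t • fourier m t • F t = fourier (-(n - m)) t • F t := by
    intro t
    rw [smul_smul, ← fourier_add, show -n + m = -(n - m) by ring]
  simp_rw [hpt]

lemma fourierCoeff_congr_ae' {F G : Circle2pi → E} (h : F =ᵐ[haarCircle2pi] G) (n : ℤ) :
    fourierCoeff F n = fourierCoeff G n := by
  simp only [fourierCoeff]
  exact integral_congr_ae (h.mono fun t ht => by dsimp only; rw [ht])

lemma memLp_apply {Θ : Circle2pi → (E →L[ℂ] E)} (hΘ : IsInner Θ)
    {F : Circle2pi → E} (hF : MemLp F 2 haarCircle2pi) :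
    MemLp (fun t => Θ t (F t)) 2 haarCircle2pi := by
  have hm : AEStronglyMeasurable (fun t => Θ t (F t)) haarCircle2pi :=
    isBoundedBilinearMap_apply.continuous.comp_aestronglyMeasurable (hΘ.meas.prodMk hF.1)
  refine hF.mono hm ?_
  filter_upwards [hΘ.unit] with t ht
  rw [ContinuousLinearMap.norm_map_of_mem_unitary ht]

lemma fourierCoeff_fun_sub {F G : Circle2pi → E} (hF : MemLp F 2 haarCircle2pi)
    (hG : MemLp G 2 haarCircle2pi) (n : ℤ) :
    fourierCoeff (fun t => F t - G t) n = fourierCoeff F n - fourierCoeff G n := by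
  simp only [fourierCoeff, smul_sub]
  exact integral_sub ((memLp_fourier_smul hF (-n)).integrable one_le_two)
    ((memLp_fourier_smul hG (-n)).integrable one_le_two)

lemma inner_toLp_eq (a : Lp E 2 haarCircle2pi) {φ : Circle2pi → E}
    (hφ : MemLp φ 2 haarCircle2pi) :
    ⟪a, hφ.toLp φ⟫ = ∫ t, ⟪a t, φ t⟫ ∂haarCircle2pi := by
  rw [MeasureTheory.L2.inner_def]
  exact integral_congr_ae (hφ.coeFn_toLp.mono fun t ht => by dsimp only; rw [ht])

lemma integral_fourier_eq_zero {m : ℤ} (hm : m ≠ 0) :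
    ∫ t, (fourier m t : ℂ) ∂haarCircle2pi = 0 :=
  integral_eq_zero_of_add_right_eq_neg
    (fourier_add_half_inv_index hm (by positivity))

lemma fourierCoeff_const (x : E) (n : ℤ) :
    fourierCoeff (fun _ : Circle2pi => x) n = if n = 0 then x else 0 := by
  simp only [fourierCoeff]
  rw [integral_smul_const]
  rcases eq_or_ne n 0 with h | h
  · subst h
    simp [fourier_zero]
  · rw [integral_fourier_eq_zero (neg_ne_zero.mpr h)]
    simp [h]

/-- Let `Θ` be inner and `S_Θ` the compressed shift on `K_Θ`.
If `f ∈ K_Θ` is orthogonal to `D_* = {(1/z)(Θ(z) - Θ(0)) x : x ∈ E}`, then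
`(S_Θ f)(z) = z f(z)`. -/
theorem compShift_apply_of_orth_DStarSet (Θ : Circle2pi → (E →L[ℂ] E)) (hΘ : IsInner Θ)
    (S : Lp E 2 haarCircle2pi →L[ℂ] Lp E 2 haarCircle2pi) (hS : IsCompShift Θ S)
    (f : Lp E 2 haarCircle2pi) (hf : MemK Θ f)
    (hfD : ∀ g ∈ DStarSet Θ, ⟪f, g⟫ = (0 : ℂ)) :
    (⇑(S f)) =ᵐ[haarCircle2pi] fun t => fourier 1 t • f t := by
  classical
  have hfF : MemLp (fun t => fourier 1 t • f t) 2 haarCircle2pi :=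
    memLp_fourier_smul (Lp.memLp f) 1
  set h : Lp E 2 haarCircle2pi := hfF.toLp _ with hhdef
  have hh : ⇑h =ᵐ[haarCircle2pi] fun t => fourier 1 t • f t := hfF.coeFn_toLp
  -- h ∈ H²
  have hhH2 : MemH2 h := by
    intro n hn
    rw [fourierCoeff_congr_ae' hh n, fourierCoeff_fourier_smul]
    exact hf.1 (n - 1) (by omega)
  -- h ∈ K_Θ
  have hhK : MemK Θ h := by
    refine ⟨hhH2, fun g hg => ?_⟩
    set x : E := fourierCoeff (⇑g) 0 with hxdef
    have hdmem : MemLp (fun t => fourier (-1) t • (Θ t x - fourierCoeff Θ 0 x)) 2 haarCircle2pi :=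
      memLp_fourier_smul ((memLp_apply hΘ (memLp_const x)).sub (memLp_const _)) (-1)
    set d : Lp E 2 haarCircle2pi := hdmem.toLp _ with hddef
    have hd : ⇑d =ᵐ[haarCircle2pi]
        fun t => fourier (-1) t • (Θ t x - fourierCoeff Θ 0 x) := hdmem.coeFn_toLp
    have hdD : d ∈ DStarSet Θ := ⟨x, hd⟩
    have hcmem : MemLp (fun t => fourier (-1) t • (fourierCoeff Θ 0 x : E)) 2 haarCircle2pi :=
      memLp_fourier_smul (memLp_const _) (-1)
    set c : Lp E 2 haarCircle2pi := hcmem.toLp _ with hcdef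
    have hc : ⇑c =ᵐ[haarCircle2pi]
        fun t => fourier (-1) t • (fourierCoeff Θ 0 x : E) := hcmem.coeFn_toLp
    have hkmem : MemLp (fun t => fourier (-1) t • (g t - x)) 2 haarCircle2pi :=
      memLp_fourier_smul ((Lp.memLp g).sub (memLp_const x)) (-1)
    set k : Lp E 2 haarCircle2pi := hkmem.toLp _ with hkdef
    have hk : ⇑k =ᵐ[haarCircle2pi]
        fun t => fourier (-1) t • (g t - x) := hkmem.coeFn_toLp
    -- k ∈ H²
    have hkH2 : MemH2 k := by
      intro n hn
      rw [fourierCoeff_congr_ae' hk n, fourierCoeff_fourier_smul,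
        fourierCoeff_fun_sub (Lp.memLp g) (memLp_const x), fourierCoeff_const]
      rcases eq_or_ne n (-1) with h1 | h1
      · subst h1
        norm_num [hxdef]
      · have h2 : n - (-1) < 0 := by omega
        rw [hg _ h2, if_neg (by omega), sub_zero]
    -- K := Θ · k as an Lp element
    have hKmem : MemLp (fun t => Θ t (k t)) 2 haarCircle2pi := memLp_apply hΘ (Lp.memLp k)
    set K : Lp E 2 haarCircle2pi := hKmem.toLp _ with hKdef
    have hK : ⇑K =ᵐ[haarCircle2pi] fun t => Θ t (k t) := hKmem.coeFn_toLp
    have hGmem : MemLp (fun t => Θ t (g t)) 2 haarCircle2pi := memLp_apply hΘ (Lp.memLp g)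
    -- the decomposition
    have hdec : ⟪h, hGmem.toLp _⟫ = ⟪f, d⟫ + ⟪f, c⟫ + ⟪f, K⟫ := by
      rw [← inner_add_right, ← inner_add_right, MeasureTheory.L2.inner_def,
        MeasureTheory.L2.inner_def]
      refine integral_congr_ae ?_
      filter_upwards [hh, hGmem.coeFn_toLp, Lp.coeFn_add (d + c) K, Lp.coeFn_add d c,
        hd, hc, hK, hk] with t h1 h2 h3 h4 h5 h6 h7 h8
      rw [h1, h2, h3, Pi.add_apply, h4, Pi.add_apply, h5, h6, h7, h8]
      simp only [_root_.map_smul, _root_.map_sub]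
      rw [inner_smul_left, ← fourier_neg]
      simp only [inner_smul_right, inner_sub_right, inner_add_right]
      ring
    have hfd : ⟪f, d⟫ = (0 : ℂ) := hfD d hdD
    have hfc : ⟪f, c⟫ = (0 : ℂ) := by
      rw [hcdef, inner_toLp_eq]
      have hpt : (fun t => ⟪f t, fourier (-1) t • (fourierCoeff Θ 0 x : E)⟫)
          = fun t => (starRingEnd ℂ) ⟪(fourierCoeff Θ 0 x : E), fourier 1 t • f t⟫ := by
        funext t
        rw [inner_smul_right, inner_smul_right, map_mul, ← fourier_neg, inner_conj_symm]
      rw [hpt, integral_conj, integral_inner (hfF.integrable one_le_two)]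
      have hco : fourierCoeff (⇑f) (-1) = ∫ t, fourier 1 t • f t ∂haarCircle2pi := by
        simp only [fourierCoeff, neg_neg]
      rw [← hco, hf.1 (-1) (by norm_num), inner_zero_right, map_zero]
    have hfK : ⟪f, K⟫ = (0 : ℂ) := by
      rw [hKdef, inner_toLp_eq]
      exact hf.2 k hkH2
    rw [show (∫ t, ⟪h t, Θ t (g t)⟫ ∂haarCircle2pi) = ⟪h, hGmem.toLp _⟫ from
      (inner_toLp_eq h hGmem).symm, hdec, hfd, hfc, hfK]
    ring
  -- conclude
  obtain ⟨hSfK, hSfinn⟩ := hS f hf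
  have hsubK : MemK Θ (S f - h) := by
    constructor
    · intro n hn
      rw [fourierCoeff_congr_ae' (Lp.coeFn_sub (S f) h) n]
      have : fourierCoeff (⇑(S f) - ⇑h) n
          = fourierCoeff (fun t => (S f) t - h t) n := rfl
      rw [this, fourierCoeff_fun_sub (Lp.memLp (S f)) (Lp.memLp h), hSfK.1 n hn, hhH2 n hn,
        sub_zero]
    · intro g hg
      have hGmem : MemLp (fun t => Θ t (g t)) 2 haarCircle2pi := memLp_apply hΘ (Lp.memLp g)
      rw [show (∫ t, ⟪(S f - h) t, Θ t (g t)⟫ ∂haarCircle2pi) = ⟪S f - h, hGmem.toLp _⟫ from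
        (inner_toLp_eq _ hGmem).symm, inner_sub_left, inner_toLp_eq, inner_toLp_eq,
        hSfK.2 g hg, hhK.2 g hg, sub_zero]
  have h0 : ⟪S f - h, S f - h⟫ = (0 : ℂ) := by
    rw [inner_sub_left]
    have e2 : ⟪S f, S f - h⟫ = ⟪h, S f - h⟫ := by
      rw [hSfinn (S f - h) hsubK, MeasureTheory.L2.inner_def]
      exact (integral_congr_ae (hh.mono fun t ht => by rw [ht])).symm
    rw [e2, sub_self]
  have hz : S f - h = 0 := by rwa [inner_self_eq_zero] at h0
  have hfin : S f = h := sub_eq_zero.mp hz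
  rw [hfin]
  exact hh
end
end

section
/- Let Θ be an inner function with values in L(E), let Θ̃(z) = Θ(z̄)*, and let τ be the unitary operator from K_Θ onto K_Θ̃ given by (τf)(e^{it}) = e^{-it} Θ(e^{-it})* f(e^{-it}). Then the spaces of matrix valued truncated Toeplitz operators T_Θ and T_Θ̃ are spatially isomorphic via τ: namely τ T_Θ = T_Θ̃ τ, i.e. a bounded operator A on K_Θ belongs to T_Θ if and only if τ A τ* belongs to T_Θ̃. -/
open MeasureTheory Complex ContinuousLinearMap
open scoped ComplexInnerProductSpace

noncomputable section

variable {E : Type} [NormedAddCommGroup E] [InnerProductSpace ℂ E] [FiniteDimensional ℂ E]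

open scoped ENNReal ComplexConjugate

namespace SIhelp

local notation "μ" => haarCircle2pi

/-! ### Generic helpers -/

lemma ae_neg {p : Circle2pi → Prop} (h : ∀ᵐ t ∂μ, p t) : ∀ᵐ t ∂μ, p (-t) :=
  (Measure.measurePreserving_neg μ).quasiMeasurePreserving.ae h

lemma integral_comp_neg {α : Type*} [NormedAddCommGroup α] [NormedSpace ℝ α]
    (F : Circle2pi → α) : ∫ t, F (-t) ∂μ = ∫ t, F t ∂μ :=
  integral_neg_eq_self F μ

lemma fourier_neg_arg (n : ℤ) (x : Circle2pi) : fourier n (-x) = fourier (-n) x := by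
  rw [fourier_apply, fourier_apply, smul_neg, ← neg_smul]

lemma conj_fourier (n : ℤ) (x : Circle2pi) : conj (fourier n x) = fourier (-n) x :=
  (fourier_neg).symm

lemma fourier_mul_fourier_neg (n : ℤ) (x : Circle2pi) :
    fourier (-n) x * fourier n x = 1 := by
  rw [← fourier_add, neg_add_cancel, fourier_zero]

lemma norm_fourier (n : ℤ) (x : Circle2pi) : ‖fourier n x‖ = 1 := Circle.norm_coe _

lemma integral_fourier {k : ℤ} (hk : k ≠ 0) : ∫ t, fourier k t ∂μ = 0 :=
  integral_eq_zero_of_add_right_eq_neg (fourier_add_half_inv_index hk (by positivity))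

variable {E : Type} [NormedAddCommGroup E] [InnerProductSpace ℂ E] [FiniteDimensional ℂ E]

/-! ### Unitary helpers -/

lemma unitary_adjoint_apply_apply {U : E →L[ℂ] E} (hU : U ∈ unitary (E →L[ℂ] E)) (x : E) :
    adjoint U (U x) = x := by
  have h := Unitary.star_mul_self_of_mem hU
  rw [star_eq_adjoint] at h
  calc (adjoint U) (U x) = ((adjoint U) * U) x := rfl
    _ = x := by rw [h, ContinuousLinearMap.one_apply]

lemma unitary_norm_le {U : E →L[ℂ] E} (hU : U ∈ unitary (E →L[ℂ] E)) : ‖U‖ ≤ 1 := by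
  refine U.opNorm_le_bound zero_le_one (fun x => ?_)
  rw [U.norm_map_of_mem_unitary hU, one_mul]

lemma unitary_adjoint_mem {U : E →L[ℂ] E} (hU : U ∈ unitary (E →L[ℂ] E)) :
    adjoint U ∈ unitary (E →L[ℂ] E) := by
  rw [← star_eq_adjoint]; exact Unitary.star_mem hU

lemma unitary_adjoint_norm_le {U : E →L[ℂ] E} (hU : U ∈ unitary (E →L[ℂ] E)) :
    ‖adjoint U‖ ≤ 1 := unitary_norm_le (unitary_adjoint_mem hU)

lemma unitary_inner_adjoint {U : E →L[ℂ] E} (hU : U ∈ unitary (E →L[ℂ] E)) (x y : E) :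
    ⟪adjoint U x, adjoint U y⟫ = ⟪x, y⟫ :=
  (adjoint U).inner_map_map_of_mem_unitary (unitary_adjoint_mem hU) x y

/-! ### Measurability and integrability helpers -/

lemma asm_apply {Θ : Circle2pi → (E →L[ℂ] E)} {f : Circle2pi → E}
    (hΘ : AEStronglyMeasurable Θ μ) (hf : AEStronglyMeasurable f μ) :
    AEStronglyMeasurable (fun t => Θ t (f t)) μ :=
  isBoundedBilinearMap_apply.continuous.comp_aestronglyMeasurable (hΘ.prodMk hf)

lemma asm_comp {Θ Φ : Circle2pi → (E →L[ℂ] E)}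
    (hΘ : AEStronglyMeasurable Θ μ) (hΦ : AEStronglyMeasurable Φ μ) :
    AEStronglyMeasurable (fun t => (Θ t).comp (Φ t)) μ :=
  (isBoundedBilinearMap_comp (𝕜 := ℂ) (E := E) (F := E)
    (G := E)).continuous.comp_aestronglyMeasurable (hΘ.prodMk hΦ)

lemma asm_neg {α : Type*} [TopologicalSpace α] {f : Circle2pi → α}
    (hf : AEStronglyMeasurable f μ) : AEStronglyMeasurable (fun t => f (-t)) μ :=
  hf.comp_measurePreserving (Measure.measurePreserving_neg μ)

lemma asm_adjoint {Θ : Circle2pi → (E →L[ℂ] E)} (hΘ : AEStronglyMeasurable Θ μ) :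
    AEStronglyMeasurable (fun t => adjoint (Θ t)) μ := by
  have : (fun t => adjoint (Θ t)) = (fun A : E →L[ℂ] E => star A) ∘ Θ := by
    funext t; simp [star_eq_adjoint]
  rw [this]
  exact continuous_star.comp_aestronglyMeasurable hΘ

lemma asm_tild {Θ : Circle2pi → (E →L[ℂ] E)} (hΘ : AEStronglyMeasurable Θ μ) :
    AEStronglyMeasurable (tild Θ) μ := asm_adjoint (asm_neg hΘ)

lemma memℒp_fourier_smul {α : Type*} [NormedAddCommGroup α] [NormedSpace ℂ α]
    {p : ℝ≥0∞} {f : Circle2pi → α} (hf : MemLp f p μ) (n : ℤ) :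
    MemLp (fun t => fourier n t • f t) p μ := by
  refine hf.of_le ((fourier n).continuous.aestronglyMeasurable.smul hf.1) ?_
  filter_upwards with t
  rw [norm_smul, norm_fourier, one_mul]

lemma memℒp_apply_of_bound {p : ℝ≥0∞} {Θ : Circle2pi → (E →L[ℂ] E)} {f : Circle2pi → E}
    (hΘ : AEStronglyMeasurable Θ μ) (hb : ∀ᵐ t ∂μ, ‖Θ t‖ ≤ 1) (hf : MemLp f p μ) :
    MemLp (fun t => Θ t (f t)) p μ := by
  refine hf.of_le (asm_apply hΘ hf.1) ?_
  filter_upwards [hb] with t ht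
  calc ‖Θ t (f t)‖ ≤ ‖Θ t‖ * ‖f t‖ := (Θ t).le_opNorm _
    _ ≤ 1 * ‖f t‖ := by gcongr
    _ = ‖f t‖ := one_mul _

end SIhelp

set_option linter.unusedSectionVars false

namespace SIhelp

variable {E : Type} [NormedAddCommGroup E] [InnerProductSpace ℂ E] [FiniteDimensional ℂ E]

local notation "μ" => haarCircle2pi

lemma tild_tild (Θ : Circle2pi → (E →L[ℂ] E)) : tild (tild Θ) = Θ := by
  funext t; simp [tild, adjoint_adjoint]

lemma ae_norm_le_one {Θ : Circle2pi → (E →L[ℂ] E)} (hΘ : IsInner Θ) :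
    ∀ᵐ t ∂μ, ‖Θ t‖ ≤ 1 := hΘ.unit.mono fun _ ht => unitary_norm_le ht

lemma ae_unit_tild {Θ : Circle2pi → (E →L[ℂ] E)} (hΘ : IsInner Θ) :
    ∀ᵐ t ∂μ, tild Θ t ∈ unitary (E →L[ℂ] E) :=
  (ae_neg hΘ.unit).mono fun _ ht => unitary_adjoint_mem ht

lemma ae_norm_tild_le_one {Θ : Circle2pi → (E →L[ℂ] E)} (hΘ : IsInner Θ) :
    ∀ᵐ t ∂μ, ‖tild Θ t‖ ≤ 1 := (ae_unit_tild hΘ).mono fun _ ht => unitary_norm_le ht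

lemma memℒp_top_inner {Θ : Circle2pi → (E →L[ℂ] E)} (hΘ : IsInner Θ) : MemLp Θ ⊤ μ :=
  memLp_top_of_bound hΘ.meas 1 (ae_norm_le_one hΘ)

lemma integrable_fourier_smul_op {Θ : Circle2pi → (E →L[ℂ] E)} (hΘ : IsInner Θ) (n : ℤ) :
    Integrable (fun t => fourier n t • Θ t) μ :=
  ((memℒp_fourier_smul (memℒp_top_inner hΘ) n).mono_exponent
    (le_top : (1 : ℝ≥0∞) ≤ ⊤)).integrable le_rfl

lemma integral_star_op (f : Circle2pi → (E →L[ℂ] E)) (hf : Integrable f μ) :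
    ∫ t, star (f t) ∂μ = star (∫ t, f t ∂μ) := by
  have := ((starL' ℝ :
    (E →L[ℂ] E) ≃L[ℝ] (E →L[ℂ] E)).toContinuousLinearMap).integral_comp_comm hf
  simpa using this

lemma fourierCoeff_tild {Θ : Circle2pi → (E →L[ℂ] E)} (hΘ : IsInner Θ) (n : ℤ) :
    fourierCoeff (tild Θ) n = star (fourierCoeff Θ n) := by
  have h1 : ∀ t : Circle2pi,
      fourier (-n) t • tild Θ t = (fun s => star (fourier (-n) s • Θ s)) (-t) := by
    intro t
    show fourier (-n) t • adjoint (Θ (-t)) = star (fourier (-n) (-t) • Θ (-t))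
    rw [star_smul, star_eq_adjoint, fourier_neg_arg, RCLike.star_def, conj_fourier, neg_neg]
  calc fourierCoeff (tild Θ) n
      = ∫ t, (fun s => star (fourier (-n) s • Θ s)) (-t) ∂μ :=
        integral_congr_ae (Filter.Eventually.of_forall h1)
    _ = ∫ t, star (fourier (-n) t • Θ t) ∂μ :=
        integral_comp_neg (fun s => star (fourier (-n) s • Θ s))
    _ = star (∫ t, fourier (-n) t • Θ t ∂μ) :=
        integral_star_op _ (integrable_fourier_smul_op hΘ (-n))
    _ = star (fourierCoeff Θ n) := rfl

lemma isInner_tild {Θ : Circle2pi → (E →L[ℂ] E)} (hΘ : IsInner Θ) : IsInner (tild Θ) :=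
  ⟨asm_tild hΘ.meas, ae_unit_tild hΘ,
    fun n hn => by rw [fourierCoeff_tild hΘ n, hΘ.anal n hn, star_zero]⟩

/-- The function defining `τ` pointwise. -/
def tfun (Θ : Circle2pi → (E →L[ℂ] E)) (f : Circle2pi → E) : Circle2pi → E :=
  fun t => fourier (-1) t • (adjoint (Θ (-t))) (f (-t))

lemma isTau_def {Θ : Circle2pi → (E →L[ℂ] E)}
    {τ : Lp E 2 haarCircle2pi →L[ℂ] Lp E 2 haarCircle2pi} :
    IsTau Θ τ ↔ ∀ f : Lp E 2 μ, ⇑(τ f) =ᵐ[μ] tfun Θ ⇑f := Iff.rfl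

lemma tfun_congr {Θ : Circle2pi → (E →L[ℂ] E)} {f g : Circle2pi → E} (h : f =ᵐ[μ] g) :
    tfun Θ f =ᵐ[μ] tfun Θ g := by
  filter_upwards [ae_neg h] with t ht
  unfold tfun; rw [ht]

lemma memℒp_tfun {Θ : Circle2pi → (E →L[ℂ] E)} (hΘ : IsInner Θ) {p : ℝ≥0∞}
    {f : Circle2pi → E} (hf : MemLp f p μ) : MemLp (tfun Θ f) p μ := by
  have h1 : MemLp (fun t => f (-t)) p μ :=
    hf.comp_measurePreserving (Measure.measurePreserving_neg μ)
  have h2 : MemLp (fun t => (tild Θ) t (f (-t))) p μ :=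
    memℒp_apply_of_bound (asm_tild hΘ.meas) (ae_norm_tild_le_one hΘ) h1
  exact memℒp_fourier_smul h2 (-1)

/-- `τ` as a map on `L²`, defined through `MemLp.toLp`. -/
def tmap {Θ : Circle2pi → (E →L[ℂ] E)} (hΘ : IsInner Θ) (f : Lp E 2 μ) : Lp E 2 μ :=
  (memℒp_tfun hΘ (Lp.memLp f)).toLp _

lemma coeFn_tmap {Θ : Circle2pi → (E →L[ℂ] E)} (hΘ : IsInner Θ) (f : Lp E 2 μ) :
    ⇑(tmap hΘ f) =ᵐ[μ] tfun Θ ⇑f := MemLp.coeFn_toLp _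

lemma tfun_inner_key (Θ : Circle2pi → (E →L[ℂ] E)) (f G : Circle2pi → E) (t : Circle2pi) :
    ⟪tfun Θ f t, G t⟫ = (fun s => ⟪f s, tfun (tild Θ) G s⟫) (-t) := by
  show ⟪fourier (-1) t • adjoint (Θ (-t)) (f (-t)), G t⟫
      = ⟪f (-t), tfun (tild Θ) G (-t)⟫
  have h : tfun (tild Θ) G (-t) = fourier (-(-1)) t • (Θ (-t)) (G t) := by
    show fourier (-1) (-t) • adjoint (tild Θ (-(-t))) (G (-(-t))) = _
    rw [fourier_neg_arg, neg_neg, neg_neg]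
    congr 1
    show adjoint (adjoint (Θ (-t))) (G t) = _
    rw [adjoint_adjoint]
  rw [h, inner_smul_left, inner_smul_right, adjoint_inner_left, conj_fourier]

lemma integral_tfun_inner (Θ : Circle2pi → (E →L[ℂ] E)) (f G : Circle2pi → E) :
    ∫ t, ⟪tfun Θ f t, G t⟫ ∂μ = ∫ t, ⟪f t, tfun (tild Θ) G t⟫ ∂μ := by
  calc ∫ t, ⟪tfun Θ f t, G t⟫ ∂μ
      = ∫ t, (fun s => ⟪f s, tfun (tild Θ) G s⟫) (-t) ∂μ :=
        integral_congr_ae (Filter.Eventually.of_forall (tfun_inner_key Θ f G))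
    _ = _ := integral_comp_neg (fun s => ⟪f s, tfun (tild Θ) G s⟫)

end SIhelp

namespace SIhelp

variable {E : Type} [NormedAddCommGroup E] [InnerProductSpace ℂ E] [FiniteDimensional ℂ E]

local notation "μ" => haarCircle2pi

lemma fourierCoeff_congr_ae {α : Type} [NormedAddCommGroup α] [NormedSpace ℂ α]
    {f g : Circle2pi → α} (h : f =ᵐ[μ] g) (n : ℤ) :
    fourierCoeff f n = fourierCoeff g n := by
  unfold fourierCoeff
  exact integral_congr_ae (h.mono fun t ht => by show fourier (-n) t • f t = fourier (-n) t • g t; rw [ht])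

lemma integrable_of_memℒp2 {α : Type*} [NormedAddCommGroup α] [NormedSpace ℂ α]
    {f : Circle2pi → α} (hf : MemLp f 2 μ) : Integrable f μ :=
  hf.integrable (by norm_num)

/-- Fourier coefficients of scalar components. -/
lemma fourierCoeff_inner {f : Circle2pi → E} (hf : MemLp f 2 μ) (x : E) (n : ℤ) :
    fourierCoeff (fun t => ⟪x, f t⟫) n = ⟪x, fourierCoeff f n⟫ := by
  have h1 : ∀ t : Circle2pi, fourier (-n) t • ⟪x, f t⟫ = ⟪x, fourier (-n) t • f t⟫ := by
    intro t; rw [inner_smul_right]; rfl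
  calc fourierCoeff (fun t => ⟪x, f t⟫) n
      = ∫ t, ⟪x, fourier (-n) t • f t⟫ ∂μ :=
        integral_congr_ae (Filter.Eventually.of_forall h1)
    _ = ⟪x, ∫ t, fourier (-n) t • f t ∂μ⟫ :=
        (integral_inner (integrable_of_memℒp2 (memℒp_fourier_smul hf (-n))) x)
    _ = ⟪x, fourierCoeff f n⟫ := rfl

/-- Scalar orthogonality: an analytic and a co-analytic `L²` function are orthogonal. -/
lemma scalar_orth (u v : Lp ℂ 2 μ) (hu : ∀ n : ℤ, n < 0 → fourierCoeff (⇑u) n = 0)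
    (hv : ∀ n : ℤ, 0 ≤ n → fourierCoeff (⇑v) n = 0) : ⟪u, v⟫ = 0 := by
  rw [← fourierBasis.tsum_inner_mul_inner u v]
  have h : ∀ n : ℤ, ⟪u, fourierBasis (T := 2 * Real.pi) n⟫ * ⟪fourierBasis n, v⟫ = 0 := by
    intro n
    rcases lt_or_ge n 0 with h | h
    · have h0 : ⟪fourierBasis (T := 2 * Real.pi) n, u⟫ = 0 := by
        rw [← fourierBasis.repr_apply_apply, fourierBasis_repr]
        exact hu n h
      rw [← inner_conj_symm, h0, map_zero, zero_mul]
    · have h0 : ⟪fourierBasis (T := 2 * Real.pi) n, v⟫ = 0 := by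
        rw [← fourierBasis.repr_apply_apply, fourierBasis_repr]
        exact hv n h
      rw [h0, mul_zero]
  simp only [h, tsum_zero]

/-- Vector-valued orthogonality of analytic and co-analytic functions. -/
lemma inner_orth {f h : Circle2pi → E} (hf : MemLp f 2 μ) (hh : MemLp h 2 μ)
    (h1 : ∀ n : ℤ, n < 0 → fourierCoeff f n = 0)
    (h2 : ∀ n : ℤ, 0 ≤ n → fourierCoeff h n = 0) :
    ∫ t, ⟪f t, h t⟫ ∂μ = 0 := by
  classical
  set F : Lp E 2 μ := hf.toLp f with hF
  set H : Lp E 2 μ := hh.toLp h with hH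
  set b := stdOrthonormalBasis ℂ E with hb
  set u : Fin (Module.finrank ℂ E) → Lp ℂ 2 μ := fun i => (innerSL ℂ (b i)).compLp F with hu
  set v : Fin (Module.finrank ℂ E) → Lp ℂ 2 μ := fun i => (innerSL ℂ (b i)).compLp H with hv
  have hcoefF : ∀ n : ℤ, fourierCoeff (⇑F) n = fourierCoeff f n :=
    fun n => fourierCoeff_congr_ae (hf.coeFn_toLp) n
  have hcoefH : ∀ n : ℤ, fourierCoeff (⇑H) n = fourierCoeff h n :=
    fun n => fourierCoeff_congr_ae (hh.coeFn_toLp) n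
  have hui : ∀ i n, fourierCoeff (⇑(u i)) n = ⟪b i, fourierCoeff f n⟫ := by
    intro i n
    rw [fourierCoeff_congr_ae (coeFn_compLp (innerSL ℂ (b i)) F) n]
    rw [show (fun t => (innerSL ℂ (b i)) (F t)) = fun t => ⟪b i, F t⟫ from rfl]
    rw [fourierCoeff_inner (Lp.memLp F), ← hcoefF n]
  have hvi : ∀ i n, fourierCoeff (⇑(v i)) n = ⟪b i, fourierCoeff h n⟫ := by
    intro i n
    rw [fourierCoeff_congr_ae (coeFn_compLp (innerSL ℂ (b i)) H) n]
    rw [show (fun t => (innerSL ℂ (b i)) (H t)) = fun t => ⟪b i, H t⟫ from rfl]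
    rw [fourierCoeff_inner (Lp.memLp H), ← hcoefH n]
  -- a.e. pointwise expansion of the inner product
  have hae : (fun t => ⟪f t, h t⟫) =ᵐ[μ] fun t => ∑ i, ⟪(u i) t, (v i) t⟫ := by
    have hFf := hf.coeFn_toLp
    have hHh := hh.coeFn_toLp
    have hucoe : ∀ i, ⇑(u i) =ᵐ[μ] fun t => ⟪b i, F t⟫ :=
      fun i => coeFn_compLp (innerSL ℂ (b i)) F
    have hvcoe : ∀ i, ⇑(v i) =ᵐ[μ] fun t => ⟪b i, H t⟫ :=
      fun i => coeFn_compLp (innerSL ℂ (b i)) H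
    have hall_u : ∀ᵐ t ∂μ, ∀ i, (u i) t = ⟪b i, F t⟫ :=
      (MeasureTheory.ae_all_iff).2 hucoe
    have hall_v : ∀ᵐ t ∂μ, ∀ i, (v i) t = ⟪b i, H t⟫ :=
      (MeasureTheory.ae_all_iff).2 hvcoe
    filter_upwards [hFf, hHh, hall_u, hall_v] with t ht1 ht2 ht3 ht4
    rw [← ht1, ← ht2, ← b.sum_inner_mul_inner (F t) (H t)]
    refine Finset.sum_congr rfl fun i _ => ?_
    rw [ht3 i, ht4 i, RCLike.inner_apply, ← inner_conj_symm (F t) (b i), mul_comm]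
  rw [integral_congr_ae hae, integral_finset_sum _
    (fun i _ => L2.integrable_inner (𝕜 := ℂ) (u i) (v i))]
  refine Finset.sum_eq_zero fun i _ => ?_
  rw [← L2.inner_def]
  refine scalar_orth (u i) (v i) (fun n hn => ?_) (fun n hn => ?_)
  · rw [hui i n, h1 n hn, inner_zero_right]
  · rw [hvi i n, h2 n hn, inner_zero_right]

end SIhelp

namespace SIhelp

variable {E : Type} [NormedAddCommGroup E] [InnerProductSpace ℂ E] [FiniteDimensional ℂ E]

local notation "μ" => haarCircle2pi

lemma fourierCoeff_fourier_smul_const (m k : ℤ) (x : E) (h : k ≠ m) :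
    fourierCoeff (fun t : Circle2pi => fourier m t • x) k = 0 := by
  unfold fourierCoeff
  have key : ∀ t : Circle2pi, fourier (-k) t • (fun s => fourier m s • x) t
      = fourier (-k + m) t • x := by
    intro t
    show fourier (-k) t • fourier m t • x = _
    rw [smul_smul, ← fourier_add]
  rw [integral_congr_ae (Filter.Eventually.of_forall key)]
  rw [integral_smul_const]
  rw [integral_fourier (show -k + m ≠ 0 by omega), zero_smul]

/-- The `L²` element `t ↦ fourier m t • x`. -/
def monomial (m : ℤ) (x : E) : Lp E 2 μ :=
  (memℒp_fourier_smul (memLp_const x) m).toLp _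

lemma coeFn_monomial (m : ℤ) (x : E) :
    ⇑(monomial m x) =ᵐ[μ] fun t => fourier m t • x := MemLp.coeFn_toLp _

lemma memH2_monomial {m : ℤ} (hm : 0 ≤ m) (x : E) : MemH2 (monomial m x) := by
  intro k hk
  rw [fourierCoeff_congr_ae (coeFn_monomial m x) k]
  exact fourierCoeff_fourier_smul_const m k x (by omega)

lemma fourierCoeff_tfun (Θ : Circle2pi → (E →L[ℂ] E)) (f : Circle2pi → E) (n : ℤ) :
    fourierCoeff (tfun Θ f) n = ∫ t, fourier (n + 1) t • adjoint (Θ t) (f t) ∂μ := by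
  unfold fourierCoeff
  have key : ∀ t : Circle2pi, fourier (-n) t • tfun Θ f t
      = (fun s => fourier (n + 1) s • adjoint (Θ s) (f s)) (-t) := by
    intro t
    show fourier (-n) t • (fourier (-1) t • adjoint (Θ (-t)) (f (-t)))
        = fourier (n + 1) (-t) • adjoint (Θ (-t)) (f (-t))
    rw [fourier_neg_arg, smul_smul, ← fourier_add]
    congr 2
    ring
  rw [integral_congr_ae (Filter.Eventually.of_forall key),
    integral_comp_neg (fun s => fourier (n + 1) s • adjoint (Θ s) (f s))]

lemma memH2_tau {Θ : Circle2pi → (E →L[ℂ] E)}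
    {τ : Lp E 2 haarCircle2pi →L[ℂ] Lp E 2 haarCircle2pi}
    (hΘ : IsInner Θ) (hτ : IsTau Θ τ) {f : Lp E 2 μ} (hf : MemK Θ f) : MemH2 (τ f) := by
  intro n hn
  rw [fourierCoeff_congr_ae (show ⇑(τ f) =ᵐ[μ] tfun Θ ⇑f from hτ f) n, fourierCoeff_tfun]
  have hint : Integrable (fun t => fourier (n + 1) t • adjoint (Θ t) (f t)) μ :=
    integrable_of_memℒp2 (memℒp_fourier_smul (memℒp_apply_of_bound (asm_adjoint hΘ.meas)
      (hΘ.unit.mono fun t ht => unitary_adjoint_norm_le ht) (Lp.memLp f)) (n + 1))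
  refine ext_inner_left ℂ fun x => ?_
  rw [inner_zero_right, ← integral_inner hint x]
  have hg := hf.2 (monomial (-(n + 1)) x) (memH2_monomial (by omega) x)
  have key : (fun t => ⟪x, fourier (n + 1) t • adjoint (Θ t) (f t)⟫) =ᵐ[μ]
      (fun t => conj ⟪f t, Θ t ((monomial (-(n + 1)) x) t)⟫) := by
    filter_upwards [coeFn_monomial (-(n + 1)) x] with t ht
    rw [ht]
    show ⟪x, fourier (n + 1) t • adjoint (Θ t) (f t)⟫
        = conj ⟪f t, Θ t (fourier (-(n + 1)) t • x)⟫
    rw [inner_smul_right, adjoint_inner_right, _root_.map_smul, inner_smul_right, _root_.map_mul,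
      ← inner_conj_symm, conj_fourier, neg_neg]
  rw [integral_congr_ae key, integral_conj, hg, map_zero]

lemma memKorth_tau {Θ : Circle2pi → (E →L[ℂ] E)}
    {τ : Lp E 2 haarCircle2pi →L[ℂ] Lp E 2 haarCircle2pi}
    (hΘ : IsInner Θ) (hτ : IsTau Θ τ) {f : Lp E 2 μ} (hf : MemK Θ f) :
    ∀ g : Lp E 2 μ, MemH2 g →
      ∫ t, ⟪(τ f) t, tild Θ t (g t)⟫ ∂μ = 0 := by
  intro g hg
  set h : Circle2pi → E := fun s => fourier (-1) s • g (-s) with hh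
  have hmem : MemLp h 2 μ :=
    memℒp_fourier_smul ((Lp.memLp g).comp_measurePreserving
      (Measure.measurePreserving_neg μ)) (-1)
  have e1 : (fun t => ⟪(τ f) t, tild Θ t (g t)⟫) =ᵐ[μ]
      (fun t => (fun s => ⟪f s, h s⟫) (-t)) := by
    filter_upwards [hτ f, ae_neg hΘ.unit] with t ht hu
    rw [show ((τ f) t : E) = tfun Θ (⇑f) t from ht]
    show ⟪fourier (-1) t • adjoint (Θ (-t)) (f (-t)), adjoint (Θ (-t)) (g t)⟫
        = ⟪f (-t), fourier (-1) (-t) • g (-(-t))⟫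
    rw [neg_neg, fourier_neg_arg, inner_smul_left, inner_smul_right,
      unitary_inner_adjoint hu, conj_fourier]
  rw [integral_congr_ae e1, integral_comp_neg (fun s => ⟪f s, h s⟫)]
  refine inner_orth (Lp.memLp f) hmem hf.1 (fun n hn => ?_)
  -- coefficients of h vanish for n ≥ 0
  have key : ∀ s : Circle2pi, fourier (-n) s • h s
      = (fun r => fourier (n + 1) r • g r) (-s) := by
    intro s
    show fourier (-n) s • (fourier (-1) s • g (-s)) = fourier (n + 1) (-s) • g (-s)
    rw [fourier_neg_arg, smul_smul, ← fourier_add]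
    congr 2
    ring
  have : fourierCoeff h n = fourierCoeff (⇑g) (-(n + 1)) := by
    unfold fourierCoeff
    rw [integral_congr_ae (Filter.Eventually.of_forall key),
      integral_comp_neg (fun r => fourier (n + 1) r • g r)]
    congr 1
    funext r
    rw [neg_neg]
  rw [this]
  exact hg (-(n + 1)) (by omega)

lemma memK_tau {Θ : Circle2pi → (E →L[ℂ] E)}
    {τ : Lp E 2 haarCircle2pi →L[ℂ] Lp E 2 haarCircle2pi}
    (hΘ : IsInner Θ) (hτ : IsTau Θ τ) {f : Lp E 2 μ} (hf : MemK Θ f) :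
    MemK (tild Θ) (τ f) :=
  ⟨memH2_tau hΘ hτ hf, memKorth_tau hΘ hτ hf⟩

end SIhelp

namespace SIhelp

variable {E : Type} [NormedAddCommGroup E] [InnerProductSpace ℂ E] [FiniteDimensional ℂ E]

local notation "μ" => haarCircle2pi

lemma inner_tau_eq {Θ : Circle2pi → (E →L[ℂ] E)}
    {τ : Lp E 2 haarCircle2pi →L[ℂ] Lp E 2 haarCircle2pi}
    (hΘ : IsInner Θ) (hτ : IsTau Θ τ) (f G : Lp E 2 μ) :
    ⟪τ f, G⟫ = ⟪f, tmap (isInner_tild hΘ) G⟫ := by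
  rw [L2.inner_def, L2.inner_def]
  have e1 : (fun t => (⟪(τ f) t, G t⟫ : ℂ)) =ᵐ[μ] fun t => ⟪tfun Θ (⇑f) t, G t⟫ := by
    filter_upwards [hτ f] with t ht
    rw [show ((τ f) t : E) = tfun Θ (⇑f) t from ht]
  rw [integral_congr_ae e1, integral_tfun_inner Θ (⇑f) (⇑G)]
  refine integral_congr_ae ?_
  filter_upwards [coeFn_tmap (isInner_tild hΘ) G] with t ht
  rw [show ((tmap (isInner_tild hΘ) G) t : E) = tfun (tild Θ) (⇑G) t from ht]

lemma adjoint_tau_eq {Θ : Circle2pi → (E →L[ℂ] E)}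
    {τ : Lp E 2 haarCircle2pi →L[ℂ] Lp E 2 haarCircle2pi}
    (hΘ : IsInner Θ) (hτ : IsTau Θ τ) (G : Lp E 2 μ) :
    adjoint τ G = tmap (isInner_tild hΘ) G := by
  refine ext_inner_left ℂ fun v => ?_
  rw [adjoint_inner_right]
  exact inner_tau_eq hΘ hτ v G

lemma isTau_adjoint {Θ : Circle2pi → (E →L[ℂ] E)}
    {τ : Lp E 2 haarCircle2pi →L[ℂ] Lp E 2 haarCircle2pi}
    (hΘ : IsInner Θ) (hτ : IsTau Θ τ) : IsTau (tild Θ) (adjoint τ) := by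
  intro G
  rw [adjoint_tau_eq hΘ hτ G]
  exact coeFn_tmap (isInner_tild hΘ) G

lemma tau_left_inv {Θ : Circle2pi → (E →L[ℂ] E)}
    {τ σ : Lp E 2 haarCircle2pi →L[ℂ] Lp E 2 haarCircle2pi}
    (hΘ : IsInner Θ) (hτ : IsTau Θ τ) (hσ : IsTau (tild Θ) σ) (G : Lp E 2 μ) :
    τ (σ G) = G := by
  apply Lp.ext
  have e1 : ⇑(τ (σ G)) =ᵐ[μ] tfun Θ ⇑(σ G) := hτ (σ G)
  have e2 : tfun Θ ⇑(σ G) =ᵐ[μ] tfun Θ (tfun (tild Θ) ⇑G) := tfun_congr (hσ G)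
  have e3 : tfun Θ (tfun (tild Θ) ⇑G) =ᵐ[μ] ⇑G := by
    filter_upwards [ae_neg hΘ.unit] with t hu
    show fourier (-1) t • adjoint (Θ (-t)) ((tfun (tild Θ) ⇑G) (-t)) = G t
    have h : (tfun (tild Θ) ⇑G) (-t) = fourier (-(-1)) t • (Θ (-t)) (G t) := by
      show fourier (-1) (-t) • adjoint (tild Θ (-(-t))) (G (-(-t))) = _
      rw [fourier_neg_arg, neg_neg, neg_neg]
      congr 1
      show adjoint (adjoint (Θ (-t))) (G t) = _
      rw [adjoint_adjoint]
    rw [h, _root_.map_smul, smul_smul, unitary_adjoint_apply_apply hu, mul_comm,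
      fourier_mul_fourier_neg, one_smul]
  exact e1.trans (e2.trans e3)

lemma tau_right_inv {Θ : Circle2pi → (E →L[ℂ] E)}
    {τ : Lp E 2 haarCircle2pi →L[ℂ] Lp E 2 haarCircle2pi}
    (hΘ : IsInner Θ) (hτ : IsTau Θ τ) (G : Lp E 2 μ) :
    τ (adjoint τ G) = G :=
  tau_left_inv hΘ hτ (isTau_adjoint hΘ hτ) G

lemma tau_left_inv' {Θ : Circle2pi → (E →L[ℂ] E)}
    {τ : Lp E 2 haarCircle2pi →L[ℂ] Lp E 2 haarCircle2pi}
    (hΘ : IsInner Θ) (hτ : IsTau Θ τ) (f : Lp E 2 μ) :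
    adjoint τ (τ f) = f := by
  have h2 : IsTau (tild (tild Θ)) τ := by rw [tild_tild]; exact hτ
  exact tau_left_inv (isInner_tild hΘ) (isTau_adjoint hΘ hτ) h2 f

/-- The main one-directional statement. -/
lemma memTT_forward {Θ : Circle2pi → (E →L[ℂ] E)}
    {τ : Lp E 2 haarCircle2pi →L[ℂ] Lp E 2 haarCircle2pi}
    (hΘ : IsInner Θ) (hτ : IsTau Θ τ)
    (A : Lp E 2 haarCircle2pi →L[ℂ] Lp E 2 haarCircle2pi) (hTT : MemTT Θ A) :
    MemTT (tild Θ) (τ.comp (A.comp (adjoint τ))) := by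
  obtain ⟨Φ, hΦ2, hΦ⟩ := hTT
  refine ⟨fun t => ((tild Θ) t).comp ((Φ (-t)).comp (Θ (-t))), ?_, ?_⟩
  · -- the new symbol is square integrable
    have hΦneg : MemLp (fun t => Φ (-t)) 2 μ :=
      hΦ2.comp_measurePreserving (Measure.measurePreserving_neg μ)
    have hmeas : AEStronglyMeasurable
        (fun t => ((tild Θ) t).comp ((Φ (-t)).comp (Θ (-t)))) μ :=
      asm_comp (asm_tild hΘ.meas) (asm_comp hΦneg.1 (asm_neg hΘ.meas))
    refine hΦneg.of_le hmeas ?_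
    filter_upwards [ae_norm_tild_le_one hΘ, ae_neg (ae_norm_le_one hΘ)] with t h1 h2
    have a1 := opNorm_comp_le (tild Θ t) ((Φ (-t)).comp (Θ (-t)))
    have a2 := opNorm_comp_le (Φ (-t)) (Θ (-t))
    have b1 : (0:ℝ) ≤ ‖Φ (-t)‖ := norm_nonneg _
    have b2 : (0:ℝ) ≤ ‖(Φ (-t)).comp (Θ (-t))‖ := norm_nonneg _
    have b3 : (0:ℝ) ≤ ‖Θ (-t)‖ := norm_nonneg _
    have b4 : (0:ℝ) ≤ ‖tild Θ t‖ := norm_nonneg _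
    nlinarith
  · intro F hF hFtop
    have hστ : IsTau (tild Θ) (adjoint τ) := isTau_adjoint hΘ hτ
    have hfK : MemK Θ (adjoint τ F) := by
      have h := memK_tau (isInner_tild hΘ) hστ hF
      rwa [tild_tild] at h
    have hftop : MemLp (⇑(adjoint τ F)) ⊤ μ :=
      (memℒp_tfun (isInner_tild hΘ) hFtop).ae_eq (hστ F).symm
    obtain ⟨hAfK, hform⟩ := hΦ (adjoint τ F) hfK hftop
    constructor
    · show MemK (tild Θ) (τ (A (adjoint τ F)))
      exact memK_tau hΘ hτ hAfK
    · intro G hG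
      have hgK : MemK Θ (adjoint τ G) := by
        have h := memK_tau (isInner_tild hΘ) hστ hG
        rwa [tild_tild] at h
      have h1 : ⟪(τ.comp (A.comp (adjoint τ))) F, G⟫ = ⟪A (adjoint τ F), adjoint τ G⟫ := by
        show ⟪τ (A (adjoint τ F)), G⟫ = _
        rw [← adjoint_inner_right]
      rw [h1, hform (adjoint τ G) hgK]
      have e : (fun t => (⟪Φ t ((adjoint τ F) t), (adjoint τ G) t⟫ : ℂ)) =ᵐ[μ]
          (fun t => (fun s =>
            (⟪((tild Θ) s).comp ((Φ (-s)).comp (Θ (-s))) (F s), G s⟫ : ℂ)) (-t)) := by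
        filter_upwards [hστ F, hστ G] with t htF htG
        rw [show ((adjoint τ F) t : E) = tfun (tild Θ) (⇑F) t from htF,
          show ((adjoint τ G) t : E) = tfun (tild Θ) (⇑G) t from htG]
        show ⟪Φ t (fourier (-1) t • adjoint (tild Θ (-t)) (F (-t))),
              fourier (-1) t • adjoint (tild Θ (-t)) (G (-t))⟫
            = ⟪((tild Θ) (-t)).comp ((Φ (-(-t))).comp (Θ (-(-t)))) (F (-t)), G (-t)⟫
        have hadj : adjoint (tild Θ (-t)) = Θ t := by
          show adjoint (adjoint (Θ (-(-t)))) = Θ t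
          rw [neg_neg, adjoint_adjoint]
        have hadj2 : tild Θ (-t) = adjoint (Θ t) := by
          show adjoint (Θ (-(-t))) = _
          rw [neg_neg]
        rw [neg_neg, hadj, hadj2]
        rw [_root_.map_smul, inner_smul_left, inner_smul_right, ← mul_assoc,
          conj_fourier, fourier_mul_fourier_neg, one_mul]
        show (⟪Φ t ((Θ t) (F (-t))), (Θ t) (G (-t))⟫ : ℂ)
            = ⟪adjoint (Θ t) ((Φ t) ((Θ t) (F (-t)))), G (-t)⟫
        rw [adjoint_inner_left]
      rw [integral_congr_ae e, integral_comp_neg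
        (fun s => (⟪((tild Θ) s).comp ((Φ (-s)).comp (Θ (-s))) (F s), G s⟫ : ℂ))]

end SIhelp
/-- **Spatial Isomorphism Theorem.** Let `Θ` be inner, `Θ̃(z) = Θ(z̄)*`,
and let `τ` be the unitary operator `(τ f)(e^{it}) = e^{-it} Θ(e^{-it})* f(e^{-it})`
mapping `K_Θ` onto `K_Θ̃`. Then `τ T_Θ = T_Θ̃ τ`: a bounded operator `A` on `K_Θ`
belongs to `T_Θ` if and only if `τ A τ*` belongs to `T_Θ̃`. -/
theorem spatial_isomorphism (Θ : Circle2pi → (E →L[ℂ] E)) (hΘ : IsInner Θ)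
    (τ : Lp E 2 haarCircle2pi →L[ℂ] Lp E 2 haarCircle2pi) (hτ : IsTau Θ τ)
    (A : Lp E 2 haarCircle2pi →L[ℂ] Lp E 2 haarCircle2pi)
    (hA : ∀ f, MemK Θ f → MemK Θ (A f)) :
    MemTT Θ A ↔ MemTT (tild Θ) (τ.comp (A.comp (adjoint τ))) := by
  constructor
  · exact fun h => SIhelp.memTT_forward hΘ hτ A h
  · intro h
    have h2 := SIhelp.memTT_forward (SIhelp.isInner_tild hΘ) (SIhelp.isTau_adjoint hΘ hτ)
      (τ.comp (A.comp (adjoint τ))) h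
    rw [SIhelp.tild_tild] at h2
    have heq : (adjoint τ).comp (((τ.comp (A.comp (adjoint τ)))).comp
        (adjoint (adjoint τ))) = A := by
      rw [adjoint_adjoint]
      refine ContinuousLinearMap.ext fun x => ?_
      show adjoint τ (τ (A (adjoint τ (τ x)))) = A x
      rw [SIhelp.tau_left_inv' hΘ hτ x, SIhelp.tau_left_inv' hΘ hτ (A x)]
    rwa [heq] at h2
end
end

section
/- Let Θ be an inner function with values in L(E), let Θ̃(z) = Θ(z̄)*, and let τ be the unitary operator from K_Θ onto K_Θ̃ given by (τf)(e^{it}) = e^{-it} Θ(e^{-it})* f(e^{-it}). If f ∈ K_Θ̃ is orthogonal to D̃_* = {(1/z)(Θ̃(z) − Θ̃(0))x : x ∈ E}, then τ*f ∈ K_Θ is orthogonal to D = {(I − Θ(z)Θ(0)*)x : x ∈ E}. -/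
open MeasureTheory Complex ContinuousLinearMap
open scoped ComplexInnerProductSpace

noncomputable section

variable {E : Type} [NormedAddCommGroup E] [InnerProductSpace ℂ E] [FiniteDimensional ℂ E]

section Stmt15Aux

local notation "μc" => haarCircle2pi

set_option linter.unusedSectionVars false

lemma ae_neg' {p : Circle2pi → Prop} (h : ∀ᵐ t ∂μc, p t) : ∀ᵐ t ∂μc, p (-t) :=
  ae_of_ae_map measurable_neg.aemeasurable
    (by rwa [MeasureTheory.Measure.map_neg_eq_self])

lemma integral_neg'' {α : Type*} [NormedAddCommGroup α] [NormedSpace ℝ α]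
    (F : Circle2pi → α) : ∫ t, F (-t) ∂μc = ∫ t, F t ∂μc :=
  MeasureTheory.integral_neg_eq_self F _

variable {E : Type} [NormedAddCommGroup E] [InnerProductSpace ℂ E] [FiniteDimensional ℂ E]

lemma fourierCoeff_congr' {α : Type} [NormedAddCommGroup α] [NormedSpace ℂ α]
    {F G : Circle2pi → α} (h : F =ᵐ[μc] G) (n : ℤ) :
    fourierCoeff F n = fourierCoeff G n := by
  unfold fourierCoeff
  exact integral_congr_ae (h.mono fun t ht => by dsimp only; rw [ht])

lemma norm_fourier' (n : ℤ) (t : Circle2pi) : ‖fourier n t‖ = 1 := Circle.norm_coe _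

lemma fourier_neg_arg (n : ℤ) (t : Circle2pi) : fourier n (-t) = fourier (-n) t := by
  rw [fourier_apply, fourier_apply]
  congr 1
  rw [smul_neg, neg_smul]

lemma integral_fourier' (n : ℤ) :
    ∫ t, fourier n t ∂μc = if n = 0 then 1 else 0 := by
  split_ifs with h
  · subst h
    simp [fourier_zero]
  · have hON : Orthonormal ℂ (fourierLp (T := 2 * Real.pi) 2) := orthonormal_fourier
    have ho : (⟪fourierLp (T := 2 * Real.pi) 2 0, fourierLp 2 n⟫ : ℂ) = 0 :=
      hON.2 (Ne.symm h)
    rw [MeasureTheory.L2.inner_def] at ho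
    rw [← ho]
    refine integral_congr_ae ?_ |>.symm
    filter_upwards [coeFn_fourierLp 2 (0 : ℤ), coeFn_fourierLp 2 n] with t h0 hn
    rw [h0, hn]
    simp [fourier_zero, RCLike.inner_apply]

lemma fourierCoeff_monomial (m n : ℤ) (x : E) :
    fourierCoeff (fun t : Circle2pi => fourier m t • x) n = if n = m then x else 0 := by
  unfold fourierCoeff
  have : (fun t : Circle2pi => fourier (-n) t • fourier m t • x)
      = fun t : Circle2pi => fourier (m - n) t • x := by
    ext t
    rw [smul_smul, ← fourier_add]
    congr 1
    ring
  rw [this, integral_smul_const, integral_fourier']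
  split_ifs with h1 h2 h2 <;> simp_all [sub_eq_zero]

lemma memLp_monomial (m : ℤ) (x : E) :
    MemLp (fun t => fourier m t • x) 2 μc := by
  refine MemLp.of_bound ?_ ‖x‖ ?_
  · exact ((fourier m).continuous.smul continuous_const).aestronglyMeasurable
  · filter_upwards with t
    rw [norm_smul, norm_fourier', one_mul]

lemma memLp_fourier_smul_s15 (k : ℤ) {G : Circle2pi → E} (hG : MemLp G 2 μc) :
    MemLp (fun t => fourier k t • G t) 2 μc := by
  refine MemLp.of_le hG ((fourier k).continuous.aestronglyMeasurable.smul hG.1) ?_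
  filter_upwards with t
  rw [norm_smul, norm_fourier', one_mul]

lemma integrable_fourier_smul (k : ℤ) {G : Circle2pi → E} (hG : MemLp G 2 μc) :
    Integrable (fun t => fourier k t • G t) μc :=
  (memLp_fourier_smul_s15 k hG).integrable one_le_two

lemma fourierCoeff_inner (b : E) {G : Circle2pi → E} (hG : MemLp G 2 μc) (n : ℤ) :
    fourierCoeff (fun t => (⟪b, G t⟫ : ℂ)) n = ⟪b, fourierCoeff G n⟫ := by
  unfold fourierCoeff
  rw [← integral_inner (integrable_fourier_smul (-n) hG) b]
  refine integral_congr_ae ?_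
  filter_upwards with t
  rw [inner_smul_right]
  simp [smul_eq_mul]

lemma memLp_reflect {G : Circle2pi → E} (h : MemLp G 2 μc) :
    MemLp (fun t => G (-t)) 2 μc :=
  h.comp_measurePreserving (Measure.measurePreserving_neg μc)

lemma coeff_shift_reflect {G : Circle2pi → E} (hG : MemLp G 2 μc) (n : ℤ) :
    fourierCoeff (fun t => fourier (-1) t • G (-t)) n = fourierCoeff G (-(n + 1)) := by
  unfold fourierCoeff
  have h1 : (fun t : Circle2pi => fourier (-n) t • fourier (-1) t • G (-t))
      = fun t : Circle2pi => fourier (n + 1) (-t) • G (-t) := by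
    ext t
    rw [smul_smul, ← fourier_add, fourier_neg_arg]
    congr 2
    ring
  rw [h1, integral_neg'' (fun t => fourier (n + 1) t • G t)]
  congr 1
  ext t
  congr 2
  ring

lemma parseval_zero (φ ψ : Lp ℂ 2 μc)
    (h : ∀ n : ℤ, (starRingEnd ℂ) (fourierCoeff (⇑φ) n) * fourierCoeff (⇑ψ) n = 0) :
    ⟪φ, ψ⟫ = (0 : ℂ) := by
  rw [← HilbertBasis.tsum_inner_mul_inner fourierBasis φ ψ]
  convert tsum_zero with n
  have h1 : (⟪(fourierBasis (T := 2 * Real.pi)) n, φ⟫ : ℂ) = fourierCoeff (⇑φ) n := by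
    rw [← HilbertBasis.repr_apply_apply, fourierBasis_repr]
  have h2 : (⟪(fourierBasis (T := 2 * Real.pi)) n, ψ⟫ : ℂ) = fourierCoeff (⇑ψ) n := by
    rw [← HilbertBasis.repr_apply_apply, fourierBasis_repr]
  have h3 : (⟪φ, (fourierBasis (T := 2 * Real.pi)) n⟫ : ℂ)
      = (starRingEnd ℂ) (fourierCoeff (⇑φ) n) := by
    rw [← inner_conj_symm, h1]
  rw [h2, h3]
  exact h n

lemma unit_adj_cancel {u : E →L[ℂ] E} (hu : u ∈ unitary (E →L[ℂ] E)) (y : E) :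
    adjoint u (u y) = y := by
  have h := (Unitary.mem_iff.mp hu).1
  calc adjoint u (u y) = (star u * u) y := by rw [star_eq_adjoint]; rfl
    _ = y := by rw [h, ContinuousLinearMap.one_apply]

lemma unit_norm_apply {u : E →L[ℂ] E} (hu : u ∈ unitary (E →L[ℂ] E)) (y : E) :
    ‖u y‖ = ‖y‖ := by
  have h2 : (⟪u y, u y⟫ : ℂ) = ⟪y, y⟫ := by
    have h3 := ContinuousLinearMap.adjoint_inner_left u y (u y)
    rw [unit_adj_cancel hu] at h3
    exact h3.symm
  rw [@norm_eq_sqrt_re_inner ℂ, @norm_eq_sqrt_re_inner ℂ E _ _ _ y, h2]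

lemma unit_adj_mem {u : E →L[ℂ] E} (hu : u ∈ unitary (E →L[ℂ] E)) :
    adjoint u ∈ unitary (E →L[ℂ] E) := by
  rw [← star_eq_adjoint]
  exact Unitary.star_mem hu

lemma unit_norm_le {u : E →L[ℂ] E} (hu : u ∈ unitary (E →L[ℂ] E)) : ‖u‖ ≤ 1 :=
  ContinuousLinearMap.opNorm_le_bound u zero_le_one fun y => by
    rw [unit_norm_apply hu, one_mul]

variable {Θ : Circle2pi → (E →L[ℂ] E)}

lemma integrable_Theta (hm : AEStronglyMeasurable Θ μc)
    (hu : ∀ᵐ t ∂μc, Θ t ∈ unitary (E →L[ℂ] E)) : Integrable Θ μc := by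
  refine (MemLp.of_bound hm 1 ?_).integrable (le_refl 1)
  filter_upwards [hu] with t ht
  exact unit_norm_le ht

lemma aesm_tild (hm : AEStronglyMeasurable Θ μc) :
    AEStronglyMeasurable (tild Θ) μc := by
  have h1 : AEStronglyMeasurable (Θ ∘ Neg.neg) μc :=
    hm.comp_quasiMeasurePreserving (Measure.measurePreserving_neg μc).quasiMeasurePreserving
  exact (ContinuousLinearMap.adjoint (𝕜 := ℂ) (E := E) (F := E)).continuous.comp_aestronglyMeasurable h1

lemma integrable_tild (hm : AEStronglyMeasurable Θ μc)
    (hu : ∀ᵐ t ∂μc, Θ t ∈ unitary (E →L[ℂ] E)) : Integrable (tild Θ) μc := by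
  refine (MemLp.of_bound (aesm_tild hm) 1 ?_).integrable (le_refl 1)
  filter_upwards [ae_neg' hu] with t ht
  exact unit_norm_le (unit_adj_mem ht)

lemma fourierCoeff_zero_eq_integral {α : Type} [NormedAddCommGroup α] [NormedSpace ℂ α]
    (F : Circle2pi → α) : fourierCoeff F 0 = ∫ t, F t ∂μc := by
  unfold fourierCoeff
  simp [fourier_zero]

lemma fourierCoeff_tild_zero (hm : AEStronglyMeasurable Θ μc)
    (hu : ∀ᵐ t ∂μc, Θ t ∈ unitary (E →L[ℂ] E)) :
    fourierCoeff (tild Θ) 0 = adjoint (fourierCoeff Θ 0) := by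
  have hIθ := integrable_Theta hm hu
  have hIt := integrable_tild hm hu
  refine ContinuousLinearMap.ext fun y => ?_
  refine ext_inner_left ℂ fun u => ?_
  rw [fourierCoeff_zero_eq_integral (tild Θ), fourierCoeff_zero_eq_integral Θ]
  have hIt' : Integrable (fun t => tild Θ t y) μc :=
    (ContinuousLinearMap.apply ℂ E y).integrable_comp hIt
  have hIθ' : Integrable (fun t => Θ t u) μc :=
    (ContinuousLinearMap.apply ℂ E u).integrable_comp hIθ
  have e1 : (∫ t, tild Θ t ∂μc) y = ∫ t, tild Θ t y ∂μc :=
    ((ContinuousLinearMap.apply ℂ E y).integral_comp_comm hIt).symm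
  have e1b : ∫ t, (⟪u, tild Θ t y⟫ : ℂ) ∂μc = ⟪u, ∫ t, tild Θ t y ∂μc⟫ :=
    integral_inner hIt' u
  rw [e1, ← e1b]
  have e2 : ∫ t, (⟪u, tild Θ t y⟫ : ℂ) ∂μc = ∫ t, (⟪Θ t u, y⟫ : ℂ) ∂μc := by
    rw [← integral_neg'' (fun t => (⟪Θ t u, y⟫ : ℂ))]
    refine integral_congr_ae ?_
    filter_upwards with t
    rw [tild, ContinuousLinearMap.adjoint_inner_right]
  rw [e2]
  have e3 : (∫ t, Θ t ∂μc) u = ∫ t, Θ t u ∂μc :=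
    ((ContinuousLinearMap.apply ℂ E u).integral_comp_comm hIθ).symm
  have e3b : ∫ t, (⟪y, Θ t u⟫ : ℂ) ∂μc = ⟪y, ∫ t, Θ t u ∂μc⟫ :=
    integral_inner hIθ' y
  rw [ContinuousLinearMap.adjoint_inner_right, e3, ← inner_conj_symm, ← e3b,
    ← integral_conj]
  refine (integral_congr_ae ?_).symm
  filter_upwards with t
  rw [inner_conj_symm]

lemma inner_toLp_left {G : Circle2pi → E} (hG : MemLp G 2 μc) (h : Lp E 2 μc) :
    (⟪hG.toLp G, h⟫ : ℂ) = ∫ t, ⟪G t, h t⟫ ∂μc := by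
  rw [MeasureTheory.L2.inner_def]
  refine integral_congr_ae ?_
  filter_upwards [hG.coeFn_toLp] with t ht
  rw [ht]

lemma inner_toLp_right {G : Circle2pi → E} (hG : MemLp G 2 μc) (h : Lp E 2 μc) :
    (⟪h, hG.toLp G⟫ : ℂ) = ∫ t, ⟪h t, G t⟫ ∂μc := by
  rw [MeasureTheory.L2.inner_def]
  refine integral_congr_ae ?_
  filter_upwards [hG.coeFn_toLp] with t ht
  rw [ht]

lemma monomial_inner (m : ℤ) (x : E) (h : Lp E 2 μc) :
    (⟪(memLp_monomial m x).toLp _, h⟫ : ℂ) = ⟪x, fourierCoeff (⇑h) m⟫ := by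
  rw [inner_toLp_left]
  have e1 : ∫ t, (⟪fourier m t • x, h t⟫ : ℂ) ∂μc
      = ∫ t, (⟪x, fourier (-m) t • h t⟫ : ℂ) ∂μc := by
    refine integral_congr_ae ?_
    filter_upwards with t
    rw [inner_smul_left, inner_smul_right, ← fourier_neg]
  rw [e1, integral_inner (integrable_fourier_smul (-m) (Lp.memLp h)) x]
  rfl

lemma memH2_monomial {m : ℤ} (hm : 0 ≤ m) (x : E) :
    MemH2 ((memLp_monomial m x).toLp _) := by
  intro k hk
  rw [fourierCoeff_congr' (memLp_monomial m x).coeFn_toLp, fourierCoeff_monomial,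
    if_neg (by omega)]

lemma memLp_inner_const (b : E) {G : Circle2pi → E} (hG : MemLp G 2 μc) :
    MemLp (fun t => (⟪b, G t⟫ : ℂ)) 2 μc := by
  refine MemLp.of_le (hG.norm.const_mul ‖b‖) ?_ ?_
  · exact AEStronglyMeasurable.inner aestronglyMeasurable_const hG.1
  · filter_upwards with t
    have := norm_inner_le_norm (𝕜 := ℂ) b (G t)
    simpa using this

lemma memLp_Theta_apply (hm : AEStronglyMeasurable Θ μc)
    (hu : ∀ᵐ t ∂μc, Θ t ∈ unitary (E →L[ℂ] E)) {G : Circle2pi → E}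
    (hG : MemLp G 2 μc) : MemLp (fun t => Θ t (G t)) 2 μc := by
  refine MemLp.of_le hG ?_ ?_
  · exact (ContinuousLinearMap.apply ℂ E).flip.aestronglyMeasurable_comp₂ hm hG.1
  · filter_upwards [hu] with t ht
    rw [unit_norm_apply ht]

end Stmt15Aux

/-- Let `Θ` be inner, `Θ̃(z) = Θ(z̄)*`, and `τ` the unitary operator
`(τ f)(e^{it}) = e^{-it} Θ(e^{-it})* f(e^{-it})`. If `f ∈ K_Θ̃` is orthogonal to
`D̃_* = {(1/z)(Θ̃(z) - Θ̃(0)) x : x ∈ E}`, then `τ* f ∈ K_Θ` is orthogonal to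
`D = {(I - Θ(z) Θ(0)*) x : x ∈ E}`. -/
theorem tau_adj_of_orth_DTildStar (Θ : Circle2pi → (E →L[ℂ] E)) (hΘ : IsInner Θ)
    (τ : Lp E 2 haarCircle2pi →L[ℂ] Lp E 2 haarCircle2pi) (hτ : IsTau Θ τ)
    (f : Lp E 2 haarCircle2pi) (hf : MemK (tild Θ) f)
    (hfD : ∀ g ∈ DStarSet (tild Θ), ⟪f, g⟫ = (0 : ℂ)) :
    MemK Θ (adjoint τ f) ∧ ∀ g ∈ DSet Θ, ⟪adjoint τ f, g⟫ = (0 : ℂ) := by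
  obtain ⟨hmeas, hunit, -⟩ := hΘ
  have tau_ae : ∀ (g : Lp E 2 haarCircle2pi) (G : Circle2pi → E), (⇑g) =ᵐ[haarCircle2pi] G →
      (⇑(τ g)) =ᵐ[haarCircle2pi]
        fun t => fourier (-1) t • (adjoint (Θ (-t))) (G (-t)) := by
    intro g G hg
    refine (hτ g).trans ?_
    filter_upwards [ae_neg' hg] with t ht
    simp only [ht]
  have memH2F : MemH2 (adjoint τ f) := by
    intro n hn
    have key : ∀ x : E, (⟪x, fourierCoeff (⇑(adjoint τ f)) n⟫ : ℂ) = 0 := by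
      intro x
      rw [← monomial_inner n x (adjoint τ f), ContinuousLinearMap.adjoint_inner_right]
      set g' : Lp E 2 haarCircle2pi := (memLp_monomial n x).toLp _ with hg'def
      set m : ℤ := -(n + 1) with hmdef
      have h2 : (⟪f, τ g'⟫ : ℂ) = 0 := by
        rw [MeasureTheory.L2.inner_def]
        set g₂ : Lp E 2 haarCircle2pi := (memLp_monomial m x).toLp _ with hg₂def
        have h3 : ∫ t, (⟪f t, (τ g') t⟫ : ℂ) ∂haarCircle2pi
            = ∫ t, (⟪f t, tild Θ t (g₂ t)⟫ : ℂ) ∂haarCircle2pi := by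
          refine integral_congr_ae ?_
          filter_upwards [tau_ae g' _ (memLp_monomial n x).coeFn_toLp,
            (memLp_monomial m x).coeFn_toLp] with t h4 h5
          rw [h4, h5]
          congr 1
          rw [fourier_neg_arg, tild, _root_.map_smul, smul_smul, ← fourier_add,
            show ((-1 : ℤ) + -n) = m by omega, _root_.map_smul]
        rw [h3]
        exact hf.2 g₂ (memH2_monomial (by omega) x)
      rw [← inner_conj_symm, h2, map_zero]
    have := key (fourierCoeff (⇑(adjoint τ f)) n)
    rwa [inner_self_eq_zero] at this
  have orthB : ∀ g : Lp E 2 haarCircle2pi, MemH2 g →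
      ∫ t, (⟪(adjoint τ f) t, Θ t (g t)⟫ : ℂ) ∂haarCircle2pi = 0 := by
    intro g hg
    have hmem := memLp_Theta_apply hmeas hunit (Lp.memLp g)
    have e1 : ∫ t, (⟪(adjoint τ f) t, Θ t (g t)⟫ : ℂ) ∂haarCircle2pi
        = ⟪adjoint τ f, hmem.toLp _⟫ := (inner_toLp_right hmem (adjoint τ f)).symm
    rw [e1, ContinuousLinearMap.adjoint_inner_left]
    have hχmem : MemLp (fun t : Circle2pi => fourier (-1) t • g (-t)) 2 haarCircle2pi :=
      memLp_fourier_smul_s15 (-1) (memLp_reflect (Lp.memLp g))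
    have hτh : (⇑(τ (hmem.toLp _))) =ᵐ[haarCircle2pi]
        fun t : Circle2pi => fourier (-1) t • g (-t) := by
      refine (tau_ae _ _ hmem.coeFn_toLp).trans ?_
      filter_upwards [ae_neg' hunit] with t ht
      simp only [unit_adj_cancel ht]
    have e2 : (⟪f, τ (hmem.toLp _)⟫ : ℂ) = ⟪f, hχmem.toLp _⟫ := by
      rw [MeasureTheory.L2.inner_def, inner_toLp_right]
      refine integral_congr_ae ?_
      filter_upwards [hτh] with t ht
      rw [ht]
    rw [e2]
    set b := stdOrthonormalBasis ℂ E with hbdef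
    have hφmem : ∀ i, MemLp (fun t : Circle2pi => (⟪b i, f t⟫ : ℂ)) 2 haarCircle2pi :=
      fun i => memLp_inner_const (b i) (Lp.memLp f)
    have hψmem : ∀ i, MemLp
        (fun t : Circle2pi => (⟪b i, fourier (-1) t • g (-t)⟫ : ℂ)) 2 haarCircle2pi :=
      fun i => memLp_inner_const (b i) hχmem
    have e4 : (⟪f, hχmem.toLp _⟫ : ℂ)
        = ∑ i, ⟪(hφmem i).toLp _, (hψmem i).toLp _⟫ := by
      rw [MeasureTheory.L2.inner_def]
      have hae : ∀ᵐ t ∂haarCircle2pi, (⟪f t, hχmem.toLp _ t⟫ : ℂ)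
          = ∑ i, ⟪(hφmem i).toLp _ t, (hψmem i).toLp _ t⟫ := by
        have hall1 : ∀ᵐ t ∂haarCircle2pi, ∀ i, (hφmem i).toLp _ t = ⟪b i, f t⟫ :=
          MeasureTheory.ae_all_iff.2 fun i => (hφmem i).coeFn_toLp
        have hall2 : ∀ᵐ t ∂haarCircle2pi, ∀ i,
            (hψmem i).toLp _ t = ⟪b i, fourier (-1) t • g (-t)⟫ :=
          MeasureTheory.ae_all_iff.2 fun i => (hψmem i).coeFn_toLp
        filter_upwards [hχmem.coeFn_toLp, hall1, hall2] with t h1 h2 h3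
        rw [h1, ← OrthonormalBasis.sum_inner_mul_inner b]
        refine Finset.sum_congr rfl fun i _ => ?_
        rw [h2 i, h3 i, RCLike.inner_apply, inner_conj_symm, mul_comm]
      rw [integral_congr_ae hae,
        integral_finset_sum _ (fun i _ => MeasureTheory.L2.integrable_inner _ _)]
      refine Finset.sum_congr rfl fun i _ => ?_
      rw [MeasureTheory.L2.inner_def]
    rw [e4]
    refine Finset.sum_eq_zero fun i _ => parseval_zero _ _ fun n => ?_
    have hφc : fourierCoeff (⇑((hφmem i).toLp _)) n = ⟪b i, fourierCoeff (⇑f) n⟫ := by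
      rw [fourierCoeff_congr' (hφmem i).coeFn_toLp]
      exact fourierCoeff_inner (b i) (Lp.memLp f) n
    have hψc : fourierCoeff (⇑((hψmem i).toLp _)) n
        = ⟪b i, fourierCoeff (⇑g) (-(n + 1))⟫ := by
      rw [fourierCoeff_congr' (hψmem i).coeFn_toLp]
      have h6 : (fun t : Circle2pi => (⟪b i, fourier (-1) t • g (-t)⟫ : ℂ))
          = fun t : Circle2pi => fourier (-1) t • (⟪b i, g (-t)⟫ : ℂ) := by
        ext t
        rw [inner_smul_right]
        rfl
      calc fourierCoeff (fun t : Circle2pi => (⟪b i, fourier (-1) t • g (-t)⟫ : ℂ)) n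
          = fourierCoeff (fun t : Circle2pi => fourier (-1) t • (⟪b i, g (-t)⟫ : ℂ)) n := by
            rw [h6]
        _ = fourierCoeff (fun t : Circle2pi => (⟪b i, g t⟫ : ℂ)) (-(n + 1)) :=
            coeff_shift_reflect (memLp_inner_const (b i) (Lp.memLp g)) n
        _ = ⟪b i, fourierCoeff (⇑g) (-(n + 1))⟫ :=
            fourierCoeff_inner (b i) (Lp.memLp g) _
    rcases lt_or_ge n 0 with h | h
    · rw [hφc, hf.1 n h, inner_zero_right, map_zero, zero_mul]
    · rw [hψc, hg _ (by omega), inner_zero_right, mul_zero]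
  refine ⟨⟨memH2F, orthB⟩, ?_⟩
  intro g hgD
  obtain ⟨x, hx⟩ := hgD
  rw [ContinuousLinearMap.adjoint_inner_left]
  refine hfD (τ g) ⟨x, ?_⟩
  refine (tau_ae g _ hx).trans ?_
  filter_upwards [ae_neg' hunit] with t ht
  simp only [_root_.map_sub, unit_adj_cancel ht, fourierCoeff_tild_zero hmeas hunit, tild]
end
end

section
/- Let Θ be an inner function with values in L(E), let Θ̃(z) = Θ(z̄)*, and let τ be the unitary operator from K_Θ onto K_Θ̃ given by (τf)(e^{it}) = e^{-it} Θ(e^{-it})* f(e^{-it}). Then τ T_Θ τ* ⊆ T_Θ̃: for every bounded operator A ∈ T_Θ, the operator τ A τ* on K_Θ̃ belongs to T_Θ̃. -/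
open MeasureTheory Complex ContinuousLinearMap
open scoped ComplexInnerProductSpace

noncomputable section

variable {E : Type} [NormedAddCommGroup E] [InnerProductSpace ℂ E] [FiniteDimensional ℂ E]

namespace TTOaux
open ComplexConjugate

local notation "μ" => haarCircle2pi

section Generic
variable {F G : Type} [NormedAddCommGroup F] [NormedSpace ℂ F] [NormedAddCommGroup G] [NormedSpace ℂ G]

lemma fourier_neg_arg (n : ℤ) (t : Circle2pi) : (fourier n (-t) : ℂ) = fourier (-n) t := by
  rw [fourier_apply, smul_neg, fourier_neg', ← fourier_neg]

lemma memLp_comp_neg {f : Circle2pi → F} {p : ENNReal} (hf : MemLp f p μ) :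
    MemLp (fun t => f (-t)) p μ :=
  hf.comp_measurePreserving (Measure.measurePreserving_neg _)

lemma aesm_comp_neg {f : Circle2pi → F} (hf : AEStronglyMeasurable f μ) :
    AEStronglyMeasurable (fun t => f (-t)) μ :=
  hf.comp_quasiMeasurePreserving (Measure.measurePreserving_neg _).quasiMeasurePreserving

lemma ae_comp_neg {p : Circle2pi → Prop} (h : ∀ᵐ t ∂μ, p t) : ∀ᵐ t ∂μ, p (-t) :=
  (Measure.measurePreserving_neg (haarCircle2pi)).quasiMeasurePreserving.ae h

lemma integral_comp_neg [NormedSpace ℝ F] (f : Circle2pi → F) :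
    ∫ t, f (-t) ∂μ = ∫ t, f t ∂μ := integral_neg_eq_self f μ

lemma fourierCoeff_congr [CompleteSpace F] {f g : Circle2pi → F} (n : ℤ) (h : f =ᵐ[μ] g) :
    fourierCoeff f n = fourierCoeff g n :=
  integral_congr_ae (h.mono fun t ht => congrArg (fun x => (fourier (-n)) t • x) ht)

lemma fourierCoeff_comp_neg [CompleteSpace F] (f : Circle2pi → F) (n : ℤ) :
    fourierCoeff (fun t => f (-t)) n = fourierCoeff f (-n) := by
  show ∫ t, fourier (-n) t • f (-t) ∂μ = ∫ t, fourier (-(-n)) t • f t ∂μ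
  rw [neg_neg, ← integral_comp_neg (fun s => fourier n s • f s)]
  refine integral_congr_ae (Filter.Eventually.of_forall fun t => ?_)
  simp only
  rw [fourier_neg_arg]

lemma fourierCoeff_fourier_smul [CompleteSpace F] (m : ℤ) (f : Circle2pi → F) (n : ℤ) :
    fourierCoeff (fun t => fourier m t • f t) n = fourierCoeff f (n - m) := by
  show ∫ t, fourier (-n) t • fourier m t • f t ∂μ = ∫ t, fourier (-(n - m)) t • f t ∂μ
  refine integral_congr_ae (Filter.Eventually.of_forall fun t => ?_)
  simp only
  rw [smul_smul, ← fourier_add (m := -n) (n := m)]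
  congr 2
  ring

lemma norm_fourier (n : ℤ) (t : Circle2pi) : ‖(fourier n t : ℂ)‖ = 1 := by
  simp [fourier_apply, Circle.norm_coe]

lemma memLp_fourier_smul {p : ENNReal} (m : ℤ) {f : Circle2pi → F} (hf : MemLp f p μ) :
    MemLp (fun t => fourier m t • f t) p μ := by
  refine MemLp.of_le hf (((fourier m).continuous.aestronglyMeasurable).smul hf.1) ?_
  refine Filter.Eventually.of_forall fun t => ?_
  rw [norm_smul, norm_fourier, one_mul]

lemma fourierCoeff_clm [CompleteSpace F] [CompleteSpace G] (L : F →L[ℂ] G) {f : Circle2pi → F}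
    (hf : Integrable f μ) (n : ℤ) :
    fourierCoeff (fun t => L (f t)) n = L (fourierCoeff f n) := by
  have hi : Integrable (fun t => fourier (-n) t • f t) μ :=
    memLp_one_iff_integrable.1 (memLp_fourier_smul (-n) (memLp_one_iff_integrable.2 hf))
  show ∫ t, fourier (-n) t • L (f t) ∂μ = L (∫ t, fourier (-n) t • f t ∂μ)
  rw [← L.integral_comp_comm hi]
  exact integral_congr_ae (Filter.Eventually.of_forall fun t => (L.map_smul _ _).symm)

end Generic

section Parseval

lemma fourierCoeff_fourierFn (m n : ℤ) :
    fourierCoeff (fun t : Circle2pi => (fourier m t : ℂ)) n = if n = m then 1 else 0 := by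
  have h1 : fourierCoeff (fun t : Circle2pi => (fourier m t : ℂ)) n
      = fourierCoeff (⇑(fourierLp (T := 2 * Real.pi) 2 m)) n :=
    (fourierCoeff_congr n (coeFn_fourierLp 2 m)).symm
  rw [h1, ← fourierBasis_repr, ← coe_fourierBasis, fourierBasis.repr_self,
    lp.single_apply]
  simp [Pi.single_apply]

lemma inner_toLp_eq_zero {u v : Circle2pi → ℂ} (hu : MemLp u 2 μ) (hv : MemLp v 2 μ)
    (h : ∀ n : ℤ, fourierCoeff u n = 0 ∨ fourierCoeff v n = 0) :
    ∫ t, conj (u t) * v t ∂μ = 0 := by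
  set U := hu.toLp u
  set V := hv.toLp v
  have hU : ∀ n, fourierCoeff (⇑U) n = fourierCoeff u n := fun n =>
    fourierCoeff_congr n (MemLp.coeFn_toLp hu)
  have hV : ∀ n, fourierCoeff (⇑V) n = fourierCoeff v n := fun n =>
    fourierCoeff_congr n (MemLp.coeFn_toLp hv)
  have key : ⟪U, V⟫ = 0 := by
    rw [← fourierBasis.tsum_inner_mul_inner U V]
    have : ∀ n : ℤ, ⟪U, fourierBasis n⟫ * ⟪fourierBasis n, V⟫ = 0 := by
      intro n
      have h2 : ⟪fourierBasis n, V⟫ = fourierCoeff v n := by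
        rw [← fourierBasis.repr_apply_apply, fourierBasis_repr, hV]
      have h3 : ⟪U, fourierBasis n⟫ = conj (fourierCoeff u n) := by
        rw [← inner_conj_symm, ← fourierBasis.repr_apply_apply, fourierBasis_repr, hU]
      rcases h n with h4 | h4
      · rw [h3, h4, map_zero, zero_mul]
      · rw [h2, h4, mul_zero]
    simp only [coe_fourierBasis] at this; simp [this]
  rw [L2.inner_def] at key
  rw [← key]
  apply integral_congr_ae
  filter_upwards [MemLp.coeFn_toLp hu, MemLp.coeFn_toLp hv] with t h1 h2
  rw [RCLike.inner_apply, h1, h2, mul_comm]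

end Parseval

section Unitary

variable {U : (E →L[ℂ] E)}

lemma unitary_apply_adjoint_apply (hU : U ∈ unitary (E →L[ℂ] E)) (x : E) :
    U (adjoint U x) = x := by
  have h := hU.2
  rw [star_eq_adjoint] at h
  calc U (adjoint U x) = (U * adjoint U) x := rfl
    _ = x := by rw [h]; rfl

lemma unitary_adjoint_apply_apply (hU : U ∈ unitary (E →L[ℂ] E)) (x : E) :
    adjoint U (U x) = x := by
  have h := hU.1
  rw [star_eq_adjoint] at h
  calc adjoint U (U x) = (adjoint U * U) x := rfl
    _ = x := by rw [h]; rfl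

lemma unitary_inner_map_map (hU : U ∈ unitary (E →L[ℂ] E)) (a b : E) :
    ⟪U a, U b⟫ = ⟪a, b⟫ := by
  rw [← ContinuousLinearMap.adjoint_inner_right, unitary_adjoint_apply_apply hU]

lemma unitary_inner_adjoint_map (hU : U ∈ unitary (E →L[ℂ] E)) (a b : E) :
    ⟪adjoint U a, adjoint U b⟫ = ⟪a, b⟫ := by
  rw [ContinuousLinearMap.adjoint_inner_left, unitary_apply_adjoint_apply hU]

lemma unitary_norm_apply (hU : U ∈ unitary (E →L[ℂ] E)) (x : E) : ‖U x‖ = ‖x‖ := by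
  have h := unitary_inner_map_map hU x x
  rw [inner_self_eq_norm_sq_to_K, inner_self_eq_norm_sq_to_K] at h
  have h2 : ‖U x‖ ^ 2 = ‖x‖ ^ 2 := by exact_mod_cast h
  nlinarith [norm_nonneg (U x), norm_nonneg x]

lemma unitary_norm_le_one (hU : U ∈ unitary (E →L[ℂ] E)) : ‖U‖ ≤ 1 :=
  ContinuousLinearMap.opNorm_le_bound U zero_le_one fun x => by
    rw [unitary_norm_apply hU, one_mul]

lemma unitary_adjoint_norm_le_one (hU : U ∈ unitary (E →L[ℂ] E)) : ‖adjoint U‖ ≤ 1 := by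
  rw [← star_eq_adjoint]
  exact unitary_norm_le_one (Unitary.star_mem hU)

lemma unitary_norm_adjoint_apply (hU : U ∈ unitary (E →L[ℂ] E)) (x : E) :
    ‖adjoint U x‖ = ‖x‖ := by
  rw [← star_eq_adjoint]
  exact unitary_norm_apply (Unitary.star_mem hU) x

end Unitary

section InnerFacts

variable {Θ : Circle2pi → (E →L[ℂ] E)}

lemma aesm_adjoint_comp (h : AEStronglyMeasurable Θ μ) :
    AEStronglyMeasurable (fun t => adjoint (Θ t)) μ := by
  have hc : Continuous (fun X : E →L[ℂ] E => adjoint X) :=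
    (ContinuousLinearMap.adjoint (E := E) (F := E) (𝕜 := ℂ)).continuous
  exact hc.comp_aestronglyMeasurable h

lemma aesm_apply {f : Circle2pi → E} (hΘ : AEStronglyMeasurable Θ μ)
    (hf : AEStronglyMeasurable f μ) :
    AEStronglyMeasurable (fun t => Θ t (f t)) μ :=
  isBoundedBilinearMap_apply.continuous.comp_aestronglyMeasurable (hΘ.prodMk hf)

lemma isInner_memLpTop (hΘ : IsInner Θ) : MemLp Θ ⊤ μ := by
  refine memLp_top_of_bound hΘ.meas 1 ?_
  filter_upwards [hΘ.unit] with t ht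
  exact unitary_norm_le_one ht

lemma isInner_integrable (hΘ : IsInner Θ) : Integrable Θ μ :=
  (isInner_memLpTop hΘ).integrable le_top

lemma tild_tild (Θ : Circle2pi → (E →L[ℂ] E)) : tild (tild Θ) = Θ := by
  funext t
  show adjoint (adjoint (Θ (- - t))) = Θ t
  rw [neg_neg, adjoint_adjoint]

lemma isInner_tild (hΘ : IsInner Θ) : IsInner (tild Θ) := by
  refine ⟨aesm_adjoint_comp (aesm_comp_neg hΘ.meas), ?_, ?_⟩
  · filter_upwards [ae_comp_neg hΘ.unit] with t ht
    show adjoint (Θ (-t)) ∈ unitary (E →L[ℂ] E)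
    rw [← star_eq_adjoint]
    exact Unitary.star_mem ht
  · intro n hn
    have hS : ∀ t : Circle2pi, fourier (-n) t • (tild Θ) t
        = (starL' ℝ : (E →L[ℂ] E) ≃L[ℝ] (E →L[ℂ] E)) (fourier n t • Θ (-t)) := by
      intro t
      show fourier (-n) t • adjoint (Θ (-t)) = star (fourier n t • Θ (-t))
      rw [star_smul, star_eq_adjoint, fourier_neg, Complex.star_def]
    have h1 : fourierCoeff (fun t => Θ (-t)) (-n) = ∫ t, fourier n t • Θ (-t) ∂μ := by
      show ∫ t, fourier (-(-n)) t • Θ (-t) ∂μ = _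
      rw [neg_neg]
    calc fourierCoeff (tild Θ) n = ∫ t, fourier (-n) t • (tild Θ) t ∂μ := rfl
      _ = ∫ t, (starL' ℝ : (E →L[ℂ] E) ≃L[ℝ] (E →L[ℂ] E)) (fourier n t • Θ (-t)) ∂μ :=
          integral_congr_ae (Filter.Eventually.of_forall fun t => hS t)
      _ = (starL' ℝ : (E →L[ℂ] E) ≃L[ℝ] (E →L[ℂ] E)) (∫ t, fourier n t • Θ (-t) ∂μ) :=
          ContinuousLinearEquiv.integral_comp_comm _ _
      _ = (starL' ℝ : (E →L[ℂ] E) ≃L[ℝ] (E →L[ℂ] E)) (fourierCoeff Θ n) := by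
          rw [← h1, fourierCoeff_comp_neg, neg_neg]
      _ = 0 := by rw [hΘ.anal n hn]; exact map_zero _

end InnerFacts


section KTheory

variable {Θ : Circle2pi → (E →L[ℂ] E)}

lemma integrable_fourier (m : ℤ) : Integrable (fun t : Circle2pi => (fourier m t : ℂ)) μ :=
  (memLp_top_of_bound (map_continuous (fourier m)).aestronglyMeasurable 1
    (Filter.Eventually.of_forall fun t => le_of_eq (norm_fourier m t))).integrable le_top

lemma fourierCoeff_fourier_smul_const (m n : ℤ) (x : E) :
    fourierCoeff (fun t : Circle2pi => fourier m t • x) n = if n = m then x else 0 := by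
  have h0 : (fun t : Circle2pi => fourier m t • x)
      = fun t => ContinuousLinearMap.toSpanSingleton ℂ x (fourier m t) := by
    funext t
    rw [ContinuousLinearMap.toSpanSingleton_apply]
  rw [h0, fourierCoeff_clm _ (integrable_fourier m) n, fourierCoeff_fourierFn]
  split_ifs
  · rw [ContinuousLinearMap.toSpanSingleton_apply, one_smul]
  · rw [map_zero]

lemma memLp_inner_right {x : E} (hx : ‖x‖ ≤ 1) {f : Circle2pi → E} {p : ENNReal}
    (hf : MemLp f p μ) : MemLp (fun t => (⟪x, f t⟫ : ℂ)) p μ := by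
  refine MemLp.of_le hf ((innerSL ℂ x).continuous.comp_aestronglyMeasurable hf.1) ?_
  refine Filter.Eventually.of_forall fun t => ?_
  calc ‖(⟪x, f t⟫ : ℂ)‖ ≤ ‖x‖ * ‖f t‖ := norm_inner_le_norm x (f t)
    _ ≤ 1 * ‖f t‖ := by gcongr
    _ = ‖f t‖ := one_mul _

lemma integrable_conj_mul {u v : Circle2pi → ℂ} (hu : MemLp u 2 μ) (hv : MemLp v 2 μ) :
    Integrable (fun t => conj (u t) * v t) μ := by
  refine (L2.integrable_inner (𝕜 := ℂ) (hu.toLp u) (hv.toLp v)).congr ?_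
  filter_upwards [hu.coeFn_toLp, hv.coeFn_toLp] with t h1 h2
  rw [RCLike.inner_apply, h1, h2, mul_comm]

lemma coeff_adjoint_eq_zero (hΘ : IsInner Θ) {f : Lp E 2 μ}
    (hf2 : ∀ g : Lp E 2 μ, MemH2 g → ∫ t, ⟪f t, Θ t (g t)⟫ ∂μ = 0)
    {m : ℤ} (hm : 0 ≤ m) :
    fourierCoeff (fun t => ContinuousLinearMap.adjoint (Θ t) (f t)) m = 0 := by
  set h : Circle2pi → E := fun t => ContinuousLinearMap.adjoint (Θ t) (f t) with hh
  have hmeas : AEStronglyMeasurable h μ :=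
    aesm_apply (aesm_adjoint_comp hΘ.meas) (Lp.aestronglyMeasurable f)
  have hle : ∀ᵐ t ∂μ, ‖h t‖ ≤ ‖f t‖ := by
    filter_upwards [hΘ.unit] with t ht
    exact le_of_eq (unitary_norm_adjoint_apply ht (f t))
  have hL2 : MemLp h 2 μ := MemLp.of_le (Lp.memLp f) hmeas hle
  have hint : Integrable (fun t => fourier (-m) t • h t) μ :=
    memLp_one_iff_integrable.1
      (memLp_fourier_smul (-m) (memLp_one_iff_integrable.2 (hL2.integrable one_le_two)))
  -- the test function `t ↦ e^{imt} x`
  refine ext_inner_left ℂ fun x => ?_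
  rw [inner_zero_right]
  have hgmem : MemLp (fun t : Circle2pi => fourier m t • x) 2 μ :=
    memLp_fourier_smul m (memLp_const x)
  have hGH2 : MemH2 (hgmem.toLp _) := by
    intro n hn
    rw [fourierCoeff_congr n hgmem.coeFn_toLp, fourierCoeff_fourier_smul_const]
    rw [if_neg (by omega)]
  have h3 : ∫ t, ⟪f t, Θ t (fourier m t • x)⟫ ∂μ = 0 := by
    rw [← hf2 (hgmem.toLp _) hGH2]
    refine integral_congr_ae (hgmem.coeFn_toLp.mono fun t ht => ?_)
    show (⟪f t, Θ t (fourier m t • x)⟫ : ℂ) = ⟪f t, Θ t ((hgmem.toLp _) t)⟫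
    rw [ht]
  have e1 : ∫ t, (innerSL ℂ x) (fourier (-m) t • h t) ∂μ = (innerSL ℂ x) (fourierCoeff h m) :=
    (innerSL ℂ x).integral_comp_comm hint
  have e2 : ∫ t, (innerSL ℂ x) (fourier (-m) t • h t) ∂μ
      = ∫ t, conj (⟪f t, Θ t (fourier m t • x)⟫ : ℂ) ∂μ := by
    refine integral_congr_ae (Filter.Eventually.of_forall fun t => ?_)
    show (⟪x, fourier (-m) t • h t⟫ : ℂ) = conj (⟪f t, Θ t (fourier m t • x)⟫ : ℂ)
    simp only [hh]
    rw [_root_.map_smul (Θ t), inner_smul_right, inner_smul_right, map_mul,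
      ContinuousLinearMap.adjoint_inner_right, inner_conj_symm,
      show conj ((fourier m t : ℂ)) = fourier (-m) t from (fourier_neg).symm]
  have : (innerSL ℂ x) (fourierCoeff h m) = 0 := by
    rw [← e1, e2, integral_conj, h3, map_zero]
  exact this

lemma memK_tau (hΘ : IsInner Θ) {τ : Lp E 2 μ →L[ℂ] Lp E 2 μ} (hτ : IsTau Θ τ)
    {f : Lp E 2 μ} (hf : MemK Θ f) : MemK (tild Θ) (τ f) := by
  obtain ⟨hfH2, hforth⟩ := hf
  constructor
  · -- MemH2 (τ f)
    intro n hn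
    have hkey := coeff_adjoint_eq_zero hΘ hforth (m := -(n + 1)) (by omega)
    rw [fourierCoeff_congr n (hτ f), fourierCoeff_fourier_smul]
    have e1 := fourierCoeff_comp_neg (fun s => ContinuousLinearMap.adjoint (Θ s) (f s)) (n - -1)
    refine Eq.trans e1 ?_
    rw [show -(n - -1) = -(n + 1) by ring]
    exact hkey
  · intro g hg
    -- Step 1: rewrite the integrand
    have hae : (fun t => (⟪(τ f) t, (tild Θ) t (g t)⟫ : ℂ))
        =ᵐ[μ] fun t => fourier 1 t * ⟪f (-t), g t⟫ := by
      filter_upwards [hτ f, ae_comp_neg hΘ.unit] with t ht hu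
      show (⟪(τ f) t, ContinuousLinearMap.adjoint (Θ (-t)) (g t)⟫ : ℂ) = _
      rw [ht]
      show (⟪fourier (-1) t • ContinuousLinearMap.adjoint (Θ (-t)) (f (-t)),
        ContinuousLinearMap.adjoint (Θ (-t)) (g t)⟫ : ℂ) = _
      rw [inner_smul_left, unitary_inner_adjoint_map hu, fourier_neg, Complex.conj_conj]
    rw [integral_congr_ae hae]
    -- Step 2: substitution t ↦ -t
    have hsub : ∫ t, fourier 1 t * (⟪f (-t), g t⟫ : ℂ) ∂μ
        = ∫ t, fourier (-1) t * (⟪f t, g (-t)⟫ : ℂ) ∂μ := by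
      rw [← integral_comp_neg (fun s => fourier (-1) s * (⟪f s, g (-s)⟫ : ℂ))]
      refine integral_congr_ae (Filter.Eventually.of_forall fun t => ?_)
      show fourier 1 t * (⟪f (-t), g t⟫ : ℂ) = fourier (-1) (-t) * ⟪f (-t), g (- -t)⟫
      rw [fourier_neg_arg, neg_neg, neg_neg]
    rw [hsub]
    -- Step 3: expand over an orthonormal basis
    set b := stdOrthonormalBasis ℂ E with hb
    set u : Fin (Module.finrank ℂ E) → Circle2pi → ℂ :=
      fun k t => fourier 1 t * ⟪b k, f t⟫ with hu
    set v : Fin (Module.finrank ℂ E) → Circle2pi → ℂ :=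
      fun k t => ⟪b k, g (-t)⟫ with hv
    have hnormb : ∀ k, ‖b k‖ ≤ 1 := fun k => le_of_eq (b.orthonormal.1 k)
    have hu2 : ∀ k, MemLp (u k) 2 μ := fun k => by
      have := memLp_fourier_smul (p := 2) 1 (memLp_inner_right (hnormb k) (Lp.memLp f))
      refine this.ae_eq (Filter.Eventually.of_forall fun t => ?_)
      rw [smul_eq_mul]
    have hv2 : ∀ k, MemLp (v k) 2 μ := fun k =>
      memLp_inner_right (hnormb k) (memLp_comp_neg (Lp.memLp g))
    have hpt : ∀ t, fourier (-1) t * (⟪f t, g (-t)⟫ : ℂ)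
        = ∑ k, conj (u k t) * v k t := by
      intro t
      rw [← b.sum_inner_mul_inner (f t) (g (-t)), Finset.mul_sum]
      refine Finset.sum_congr rfl fun k _ => ?_
      show fourier (-1) t * ((⟪f t, b k⟫ : ℂ) * ⟪b k, g (-t)⟫)
          = conj ((fourier 1 t : ℂ) * ⟪b k, f t⟫) * ⟪b k, g (-t)⟫
      rw [map_mul, ← fourier_neg, inner_conj_symm, mul_assoc]
    have hucoeff : ∀ k n, fourierCoeff (u k) n = (innerSL ℂ (b k)) (fourierCoeff (⇑f) (n - 1)) := by
      intro k n
      have e : u k = fun t => fourier 1 t • (innerSL ℂ (b k)) (f t) := by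
        funext t; rw [smul_eq_mul]; rfl
      rw [e, fourierCoeff_fourier_smul,
        fourierCoeff_clm _ ((Lp.memLp f).integrable one_le_two)]
    have hvcoeff : ∀ k n, fourierCoeff (v k) n = (innerSL ℂ (b k)) (fourierCoeff (⇑g) (-n)) := by
      intro k n
      have e1 := fourierCoeff_comp_neg (fun s => (innerSL ℂ (b k)) (g s)) n
      refine Eq.trans e1 ?_
      rw [fourierCoeff_clm _ ((Lp.memLp g).integrable one_le_two)]
    calc ∫ t, fourier (-1) t * (⟪f t, g (-t)⟫ : ℂ) ∂μ
        = ∫ t, ∑ k, conj (u k t) * v k t ∂μ :=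
          integral_congr_ae (Filter.Eventually.of_forall fun t => hpt t)
      _ = ∑ k, ∫ t, conj (u k t) * v k t ∂μ :=
          integral_finset_sum _ fun k _ => integrable_conj_mul (hu2 k) (hv2 k)
      _ = 0 := by
          refine Finset.sum_eq_zero fun k _ => ?_
          refine inner_toLp_eq_zero (hu2 k) (hv2 k) fun n => ?_
          by_cases hn : n ≤ 0
          · left
            rw [hucoeff k n, hfH2 (n - 1) (by omega), map_zero]
          · right
            rw [hvcoeff k n, hg (-n) (by omega), map_zero]

lemma isTau_adjoint (hΘ : IsInner Θ) {τ : Lp E 2 μ →L[ℂ] Lp E 2 μ} (hτ : IsTau Θ τ) :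
    IsTau (tild Θ) (ContinuousLinearMap.adjoint τ) := by
  intro g
  have hfun : (fun t => fourier (-1) t •
        (ContinuousLinearMap.adjoint ((tild Θ) (-t))) (g (-t)))
      = fun t => fourier (-1) t • (Θ t) (g (-t)) := by
    funext t
    show fourier (-1) t • (ContinuousLinearMap.adjoint
      (ContinuousLinearMap.adjoint (Θ (- -t)))) (g (-t)) = _
    rw [neg_neg, adjoint_adjoint]
  rw [hfun]
  set σ : Circle2pi → E := fun t => fourier (-1) t • (Θ t) (g (-t)) with hσdef
  have hmeas : AEStronglyMeasurable σ μ :=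
    (map_continuous (fourier (-1))).aestronglyMeasurable.smul
      (aesm_apply hΘ.meas (aesm_comp_neg (Lp.aestronglyMeasurable g)))
  have hbound : ∀ᵐ t ∂μ, ‖σ t‖ ≤ ‖g (-t)‖ := by
    filter_upwards [hΘ.unit] with t ht
    show ‖fourier (-1) t • (Θ t) (g (-t))‖ ≤ ‖g (-t)‖
    rw [norm_smul, norm_fourier, one_mul, unitary_norm_apply ht]
  have hσ2 : MemLp σ 2 μ :=
    MemLp.of_le (memLp_comp_neg (Lp.memLp g)) hmeas hbound
  have hG : ContinuousLinearMap.adjoint τ g = hσ2.toLp σ := by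
    refine ext_inner_right ℂ fun h => ?_
    rw [ContinuousLinearMap.adjoint_inner_left, L2.inner_def, L2.inner_def]
    have step1 : ∫ t, (⟪g t, (τ h) t⟫ : ℂ) ∂μ
        = ∫ t, fourier (-1) t * ⟪g t, (ContinuousLinearMap.adjoint (Θ (-t))) (h (-t))⟫ ∂μ := by
      refine integral_congr_ae ?_
      filter_upwards [hτ h] with t ht
      rw [ht]
      show (⟪g t, fourier (-1) t • (ContinuousLinearMap.adjoint (Θ (-t))) (h (-t))⟫ : ℂ) = _
      rw [inner_smul_right]
    have step2 : ∫ t, fourier (-1) t * (⟪g t, (ContinuousLinearMap.adjoint (Θ (-t))) (h (-t))⟫ : ℂ) ∂μ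
        = ∫ t, fourier 1 t * (⟪(Θ t) (g (-t)), h t⟫ : ℂ) ∂μ := by
      rw [← integral_comp_neg (fun s => fourier (-1) s *
        (⟪g s, (ContinuousLinearMap.adjoint (Θ (-s))) (h (-s))⟫ : ℂ))]
      refine integral_congr_ae (Filter.Eventually.of_forall fun t => ?_)
      show fourier (-1) (-t) * (⟪g (-t), (ContinuousLinearMap.adjoint (Θ (- -t))) (h (- -t))⟫ : ℂ)
          = fourier 1 t * ⟪(Θ t) (g (-t)), h t⟫
      rw [fourier_neg_arg, neg_neg, neg_neg, ContinuousLinearMap.adjoint_inner_right]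
    have step3 : ∫ t, (⟪(hσ2.toLp σ) t, h t⟫ : ℂ) ∂μ
        = ∫ t, fourier 1 t * (⟪(Θ t) (g (-t)), h t⟫ : ℂ) ∂μ := by
      refine integral_congr_ae ?_
      filter_upwards [hσ2.coeFn_toLp] with t ht
      rw [ht]
      show (⟪fourier (-1) t • (Θ t) (g (-t)), h t⟫ : ℂ) = _
      rw [inner_smul_left, fourier_neg, Complex.conj_conj]
    rw [step1, step2, step3]
  calc ⇑(ContinuousLinearMap.adjoint τ g) = ⇑(hσ2.toLp σ) := by rw [hG]
    _ =ᵐ[μ] σ := hσ2.coeFn_toLp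

lemma memLpTop_isTau (hΘ : IsInner Θ) {τ : Lp E 2 μ →L[ℂ] Lp E 2 μ} (hτ : IsTau Θ τ)
    {f : Lp E 2 μ} (hf : MemLp (⇑f) ⊤ μ) : MemLp (⇑(τ f)) ⊤ μ := by
  have hmeas : AEStronglyMeasurable
      (fun t => fourier (-1) t • (ContinuousLinearMap.adjoint (Θ (-t))) (f (-t))) μ :=
    (map_continuous (fourier (-1))).aestronglyMeasurable.smul
      (aesm_apply (aesm_adjoint_comp (aesm_comp_neg hΘ.meas))
        (aesm_comp_neg (Lp.aestronglyMeasurable f)))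
  have hbound : ∀ᵐ t ∂μ, ‖fourier (-1) t • (ContinuousLinearMap.adjoint (Θ (-t))) (f (-t))‖
      ≤ ‖f (-t)‖ := by
    filter_upwards [ae_comp_neg hΘ.unit] with t ht
    rw [norm_smul, norm_fourier, one_mul, unitary_norm_adjoint_apply ht]
  exact (MemLp.of_le (memLp_comp_neg hf) hmeas hbound).ae_eq (hτ f).symm

end KTheory

end TTOaux


set_option maxHeartbeats 1600000 in
/-- Let `Θ` be inner, `Θ̃(z) = Θ(z̄)*`, and `τ` the unitary operator
`(τ f)(e^{it}) = e^{-it} Θ(e^{-it})* f(e^{-it})` mapping `K_Θ` onto `K_Θ̃`. Then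
`τ T_Θ τ* ⊆ T_Θ̃`: for every bounded operator `A ∈ T_Θ`, the operator `τ A τ*` on
`K_Θ̃` belongs to `T_Θ̃`. -/
theorem tau_TT_tau_adj_subset (Θ : Circle2pi → (E →L[ℂ] E)) (hΘ : IsInner Θ)
    (τ : Lp E 2 haarCircle2pi →L[ℂ] Lp E 2 haarCircle2pi) (hτ : IsTau Θ τ) :
    ∀ A : Lp E 2 haarCircle2pi →L[ℂ] Lp E 2 haarCircle2pi,
      (∀ f, MemK Θ f → MemK Θ (A f)) → MemTT Θ A →
      MemTT (tild Θ) (τ.comp (A.comp (adjoint τ))) := by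
  intro A hA hTT
  obtain ⟨Φ, hΦ2, hsym⟩ := hTT
  have hΘ' : IsInner (tild Θ) := TTOaux.isInner_tild hΘ
  have hτ' : IsTau (tild Θ) (ContinuousLinearMap.adjoint τ) := TTOaux.isTau_adjoint hΘ hτ
  set Ψ : Circle2pi → (E →L[ℂ] E) :=
    fun t => (adjoint (Θ (-t))).comp ((Φ (-t)).comp (Θ (-t))) with hΨdef
  have hΨmeas : AEStronglyMeasurable Ψ haarCircle2pi := by
    have h1 := TTOaux.aesm_adjoint_comp (TTOaux.aesm_comp_neg hΘ.meas)
    have h2 := TTOaux.aesm_comp_neg hΦ2.1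
    have h3 := TTOaux.aesm_comp_neg hΘ.meas
    have c1 : AEStronglyMeasurable (fun t => (Φ (-t)).comp (Θ (-t))) haarCircle2pi :=
      (isBoundedBilinearMap_comp (𝕜 := ℂ) (E := E) (F := E) (G := E)
        ).continuous.comp_aestronglyMeasurable (h2.prodMk h3)
    exact (isBoundedBilinearMap_comp (𝕜 := ℂ) (E := E) (F := E) (G := E)
        ).continuous.comp_aestronglyMeasurable (h1.prodMk c1)
  have hΨbound : ∀ᵐ t ∂haarCircle2pi, ‖Ψ t‖ ≤ ‖Φ (-t)‖ := by
    filter_upwards [TTOaux.ae_comp_neg hΘ.unit] with t ht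
    have hA1 : ‖adjoint (Θ (-t))‖ ≤ 1 := TTOaux.unitary_adjoint_norm_le_one ht
    have hA2 : ‖Θ (-t)‖ ≤ 1 := TTOaux.unitary_norm_le_one ht
    have hc2 : ‖(Φ (-t)).comp (Θ (-t))‖ ≤ ‖Φ (-t)‖ := by
      calc ‖(Φ (-t)).comp (Θ (-t))‖ ≤ ‖Φ (-t)‖ * ‖Θ (-t)‖ := ContinuousLinearMap.opNorm_comp_le _ _
        _ ≤ ‖Φ (-t)‖ * 1 := by
            exact mul_le_mul_of_nonneg_left hA2 (norm_nonneg _)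
        _ = ‖Φ (-t)‖ := mul_one _
    calc ‖Ψ t‖ ≤ ‖adjoint (Θ (-t))‖ * ‖(Φ (-t)).comp (Θ (-t))‖ :=
          ContinuousLinearMap.opNorm_comp_le _ _
      _ ≤ 1 * ‖Φ (-t)‖ := mul_le_mul hA1 hc2 (norm_nonneg _) zero_le_one
      _ = ‖Φ (-t)‖ := one_mul _
  refine ⟨Ψ, MemLp.of_le (TTOaux.memLp_comp_neg hΦ2) hΨmeas hΨbound, ?_⟩
  intro f hfK hfb
  have hfK' : MemK Θ ((adjoint τ) f) := by
    have h := TTOaux.memK_tau hΘ' hτ' hfK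
    rwa [TTOaux.tild_tild] at h
  have hfb' : MemLp (⇑((adjoint τ) f)) ⊤ haarCircle2pi := TTOaux.memLpTop_isTau hΘ' hτ' hfb
  obtain ⟨hK1, hK2⟩ := hsym ((adjoint τ) f) hfK' hfb'
  have hAf : MemK Θ (A ((adjoint τ) f)) := hA _ hfK'
  constructor
  · exact TTOaux.memK_tau hΘ hτ hAf
  · intro g hgK
    have hgK' : MemK Θ ((adjoint τ) g) := by
      have h := TTOaux.memK_tau hΘ' hτ' hgK
      rwa [TTOaux.tild_tild] at h
    have e0 : (⟪(τ.comp (A.comp (adjoint τ))) f, g⟫ : ℂ)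
        = ⟪A ((adjoint τ) f), (adjoint τ) g⟫ :=
      (ContinuousLinearMap.adjoint_inner_right τ (A ((adjoint τ) f)) g).symm
    have e1 := hK2 ((adjoint τ) g) hgK'
    have e2 : ∫ t, (⟪Φ t (((adjoint τ) f) t), ((adjoint τ) g) t⟫ : ℂ) ∂haarCircle2pi
        = ∫ t, (fun s => (⟪Ψ s (f s), g s⟫ : ℂ)) (-t) ∂haarCircle2pi := by
      refine integral_congr_ae ?_
      filter_upwards [hτ' f, hτ' g, hΘ.unit] with t htf htg huni
      rw [htf, htg]
      show (⟪Φ t (fourier (-1) t • (adjoint ((tild Θ) (-t))) (f (-t))),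
          fourier (-1) t • (adjoint ((tild Θ) (-t))) (g (-t))⟫ : ℂ)
        = ⟪Ψ (-t) (f (-t)), g (-t)⟫
      have hadj : adjoint ((tild Θ) (-t)) = Θ t := by
        show adjoint (adjoint (Θ (- -t))) = Θ t
        rw [neg_neg, adjoint_adjoint]
      have hΨt : Ψ (-t) = (adjoint (Θ t)).comp ((Φ t).comp (Θ t)) := by
        rw [hΨdef]
        show (adjoint (Θ (- -t))).comp ((Φ (- -t)).comp (Θ (- -t))) = _
        rw [neg_neg]
      have hconj : (starRingEnd ℂ) (((fourier (-1)) t : ℂ)) = ((fourier 1) t : ℂ) := by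
        rw [fourier_neg, Complex.conj_conj]
      have hone : ((fourier 1) t : ℂ) * ((fourier (-1)) t : ℂ) = 1 := by
        rw [← fourier_add (m := 1) (n := -1)]
        norm_num
      rw [hadj, hΨt, _root_.map_smul (Φ t), inner_smul_left, inner_smul_right,
        ← mul_assoc, hconj, hone, one_mul]
      show (⟪(Φ t) ((Θ t) (f (-t))), (Θ t) (g (-t))⟫ : ℂ)
        = ⟪(adjoint (Θ t)) ((Φ t) ((Θ t) (f (-t)))), g (-t)⟫
      rw [ContinuousLinearMap.adjoint_inner_left]
    calc (⟪(τ.comp (A.comp (adjoint τ))) f, g⟫ : ℂ)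
        = ⟪A ((adjoint τ) f), (adjoint τ) g⟫ := e0
      _ = ∫ t, (⟪Φ t (((adjoint τ) f) t), ((adjoint τ) g) t⟫ : ℂ) ∂haarCircle2pi := e1
      _ = ∫ t, (fun s => (⟪Ψ s (f s), g s⟫ : ℂ)) (-t) ∂haarCircle2pi := e2
      _ = ∫ t, (⟪Ψ t (f t), g t⟫ : ℂ) ∂haarCircle2pi :=
          TTOaux.integral_comp_neg (fun s => (⟪Ψ s (f s), g s⟫ : ℂ))
end
end
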